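/- arXiv:2010.05208 — 11 statements merged into one kernel-verified Lean document; each statement's English description precedes it below -/
import Mathlib

section
/- Let f : [a,b] → [a,b] be an l-modal map with turning points c₁ < ⋯ < c_l. For every n ≥ 1, let e_n be the number of points x in the open interval (a,b) at which f^n (the n-th iterate of f) has a local extremum, and let s_n be the number of points x ∈ (a,b) such that f^n(x) = c_i for some 1 ≤ i ≤ l while f^k(x) ≠ c_j for all 0 ≤ k ≤ n−1 and all 1 ≤ j ≤ l. Then both of these sets are finite and e_{n+1} = e_n + s_n for every n ≥ 1 (with e₁ = l). -/
/-- `f : [a,b] → [a,b]` is an `l`-modal map with extended turning-point data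
`c : ℕ → ℝ` (where `c 0 = a`, `c 1 < ⋯ < c l` are the turning points, and
`c (l+1) = b`) and shape `pos` (`pos = true` meaning `f` increases on the first
lap): `f` is continuous, maps `[a,b]` into itself, and is strictly monotone on
each lap `[c j, c (j+1)]`, with alternating directions. -/
def IsLModalWithShape (a b : ℝ) (l : ℕ) (c : ℕ → ℝ) (f : ℝ → ℝ) (pos : Bool) : Prop :=
  1 ≤ l ∧ c 0 = a ∧ c (l + 1) = b ∧ (∀ i ≤ l, c i < c (i + 1)) ∧
  Set.MapsTo f (Set.Icc a b) (Set.Icc a b) ∧ ContinuousOn f (Set.Icc a b) ∧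
  ∀ j ≤ l, ((Even j ↔ pos = true) → StrictMonoOn f (Set.Icc (c j) (c (j + 1)))) ∧
    (¬(Even j ↔ pos = true) → StrictAntiOn f (Set.Icc (c j) (c (j + 1))))

/-- `f` is `l`-modal (with either shape). -/
def IsLModal (a b : ℝ) (l : ℕ) (c : ℕ → ℝ) (f : ℝ → ℝ) : Prop :=
  ∃ pos : Bool, IsLModalWithShape a b l c f pos


namespace LModalAux

/-- `x` is a turning point. -/
def IsTurn (l : ℕ) (c : ℕ → ℝ) (x : ℝ) : Prop := ∃ j, 1 ≤ j ∧ j ≤ l ∧ x = c j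

/-- The orbit of `x` avoids turning points up to time `n - 1`. -/
def Good (l : ℕ) (c : ℕ → ℝ) (f : ℝ → ℝ) (n : ℕ) (x : ℝ) : Prop :=
  ∀ k < n, ¬ IsTurn l c (f^[k] x)

/-- Points of `[a,b]` whose orbit hits a turning point before time `n`. -/
def badSet (a b : ℝ) (l : ℕ) (c : ℕ → ℝ) (f : ℝ → ℝ) (n : ℕ) : Set ℝ :=
  {x ∈ Set.Icc a b | ¬ Good l c f n x}

variable {a b : ℝ} {l : ℕ} {c : ℕ → ℝ} {f : ℝ → ℝ} {pos : Bool}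

theorem c_lt (h : IsLModalWithShape a b l c f pos) :
    ∀ i j, i < j → j ≤ l + 1 → c i < c j := by
  intro i j hij hjl
  induction j with
  | zero => omega
  | succ m ih =>
    rcases Nat.lt_or_ge i m with him | him
    · exact (ih him (by omega)).trans (h.2.2.2.1 m (by omega))
    · have : i = m := by omega
      subst this
      exact h.2.2.2.1 i (by omega)

theorem c_mem_Icc (h : IsLModalWithShape a b l c f pos) {j : ℕ} (hj : j ≤ l + 1) :
    c j ∈ Set.Icc a b := by
  constructor
  · rcases Nat.eq_zero_or_pos j with rfl | hj0
    · exact le_of_eq h.2.1.symm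
    · exact le_of_lt (h.2.1 ▸ c_lt h 0 j hj0 hj)
  · rcases Nat.lt_or_ge j (l + 1) with hj1 | hj1
    · exact le_of_lt (h.2.2.1 ▸ c_lt h j (l + 1) hj1 le_rfl)
    · have : j = l + 1 := by omega
      subst this; exact le_of_eq h.2.2.1

theorem c_mem_Ioo (h : IsLModalWithShape a b l c f pos) {j : ℕ} (hj1 : 1 ≤ j) (hjl : j ≤ l) :
    c j ∈ Set.Ioo a b :=
  ⟨h.2.1 ▸ c_lt h 0 j hj1 (by omega), h.2.2.1 ▸ c_lt h j (l + 1) (by omega) le_rfl⟩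

theorem mapsTo_iter (h : IsLModalWithShape a b l c f pos) (n : ℕ) :
    Set.MapsTo (f^[n]) (Set.Icc a b) (Set.Icc a b) := by
  induction n with
  | zero => simp [Set.MapsTo]
  | succ n ih =>
    intro x hx
    rw [Function.iterate_succ_apply]
    exact ih (h.2.2.2.2.1 hx)

theorem cont_iter (h : IsLModalWithShape a b l c f pos) (n : ℕ) :
    ContinuousOn (f^[n]) (Set.Icc a b) := by
  induction n with
  | zero => simpa using continuousOn_id
  | succ n ih =>
    rw [Function.iterate_succ]
    exact (ih.comp h.2.2.2.2.2.1 h.2.2.2.2.1)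

/-- mono or anti on each lap -/
theorem lap_mono_or_anti (h : IsLModalWithShape a b l c f pos) {j : ℕ} (hj : j ≤ l) :
    StrictMonoOn f (Set.Icc (c j) (c (j + 1))) ∨ StrictAntiOn f (Set.Icc (c j) (c (j + 1))) := by
  by_cases hp : (Even j ↔ pos = true)
  · exact Or.inl ((h.2.2.2.2.2.2 j hj).1 hp)
  · exact Or.inr ((h.2.2.2.2.2.2 j hj).2 hp)

/-- An interval whose interior avoids turning points sits inside a lap. -/
theorem lap_of (h : IsLModalWithShape a b l c f pos) {u v : ℝ}
    (hu : a ≤ u) (hv : v ≤ b) (huv : u < v)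
    (hgood : ∀ x ∈ Set.Ioo u v, ¬ IsTurn l c x) :
    ∃ j ≤ l, Set.Icc u v ⊆ Set.Icc (c j) (c (j + 1)) := by
  classical
  set j := Nat.findGreatest (fun j => c j ≤ u) l with hjdef
  have h0 : c 0 ≤ u := by rw [h.2.1]; exact hu
  have hspec : c j ≤ u := Nat.findGreatest_spec (P := fun j => c j ≤ u) (Nat.zero_le l) h0
  have hjl : j ≤ l := Nat.findGreatest_le l
  refine ⟨j, hjl, fun x hx => ⟨le_trans hspec hx.1, ?_⟩⟩
  have hvle : v ≤ c (j + 1) := by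
    by_contra hlt
    push_neg at hlt
    have hub : u < c (j + 1) := by
      rcases Nat.lt_or_ge (j + 1) (l + 1) with hj1 | hj1
      · by_contra hle
        push_neg at hle
        exact Nat.findGreatest_is_greatest (P := fun j => c j ≤ u)
          (Nat.lt_succ_self j) (by omega) hle
      · -- j = l, c (l+1) = b ≥ v > c (j+1), contradiction
        exfalso
        have : j + 1 = l + 1 := by omega
        rw [this, h.2.2.1] at hlt
        exact absurd hv (not_le.mpr hlt)
    have hmem : c (j + 1) ∈ Set.Ioo u v := ⟨hub, hlt⟩
    have hjl1 : j + 1 ≤ l := by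
      by_contra hgt
      have : j + 1 = l + 1 := by omega
      rw [this, h.2.2.1] at hlt
      exact absurd hv (not_le.mpr hlt)
    exact hgood _ hmem ⟨j + 1, by omega, hjl1, rfl⟩
  exact le_trans hx.2 hvle

theorem good_succ {n : ℕ} {x : ℝ} :
    Good l c f (n + 1) x ↔ (¬ IsTurn l c x ∧ Good l c f n (f x)) := by
  constructor
  · intro hg
    refine ⟨by simpa using hg 0 (Nat.succ_pos n), fun k hk => ?_⟩
    have := hg (k + 1) (by omega)
    rwa [Function.iterate_succ_apply] at this
  · rintro ⟨h0, hg⟩ k hk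
    cases k with
    | zero => simpa using h0
    | succ m =>
      rw [Function.iterate_succ_apply]
      exact hg m (by omega)

/-- Key lemma: if the open interval `(u,v)` contains no point whose orbit hits a
turning point before time `n`, then `f^[n]` is strictly monotone on `[u,v]`. -/
theorem mono_of_good (h : IsLModalWithShape a b l c f pos) :
    ∀ n {u v : ℝ}, a ≤ u → v ≤ b → u < v → (∀ x ∈ Set.Ioo u v, Good l c f n x) →
      StrictMonoOn (f^[n]) (Set.Icc u v) ∨ StrictAntiOn (f^[n]) (Set.Icc u v) := by
  intro n
  induction n with
  | zero =>
    intro u v _ _ _ _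
    left
    intro x _ y _ hxy
    simpa using hxy
  | succ n ih =>
    intro u v hu hv huv hgood
    have hgood' : ∀ x ∈ Set.Ioo u v, ¬ IsTurn l c x ∧ Good l c f n (f x) :=
      fun x hx => good_succ.mp (hgood x hx)
    obtain ⟨j, hjl, hsub⟩ := lap_of h hu hv huv (fun x hx => (hgood' x hx).1)
    have hlap := lap_mono_or_anti h hjl
    have hsubab : Set.Icc u v ⊆ Set.Icc a b :=
      fun x hx => ⟨hu.trans hx.1, hx.2.trans hv⟩
    have hcf : ContinuousOn f (Set.Icc u v) := h.2.2.2.2.2.1.mono hsubab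
    have hum : u ∈ Set.Icc u v := Set.left_mem_Icc.2 huv.le
    have hvm : v ∈ Set.Icc u v := Set.right_mem_Icc.2 huv.le
    have hfu : f u ∈ Set.Icc a b := h.2.2.2.2.1 (hsubab hum)
    have hfv : f v ∈ Set.Icc a b := h.2.2.2.2.1 (hsubab hvm)
    rcases hlap with hmono | hanti
    · -- f strictly increasing on [u,v]
      have hm : StrictMonoOn f (Set.Icc u v) := hmono.mono hsub
      have hlt : f u < f v := hm hum hvm huv
      have hmid : ∀ y ∈ Set.Ioo (f u) (f v), Good l c f n y := by
        intro y hy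
        obtain ⟨x, hx, rfl⟩ := intermediate_value_Ioo huv.le hcf hy
        exact (hgood' x hx).2
      have hmaps : Set.MapsTo f (Set.Icc u v) (Set.Icc (f u) (f v)) :=
        fun x hx => ⟨hm.monotoneOn hum hx hx.1, hm.monotoneOn hx hvm hx.2⟩
      rcases ih hfu.1 hfv.2 hlt hmid with hq | hq
      · left
        intro x hx y hy hxy
        rw [Function.iterate_succ_apply, Function.iterate_succ_apply]
        exact hq (hmaps hx) (hmaps hy) (hm hx hy hxy)
      · right
        intro x hx y hy hxy
        rw [Function.iterate_succ_apply, Function.iterate_succ_apply]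
        exact hq (hmaps hx) (hmaps hy) (hm hx hy hxy)
    · -- f strictly decreasing on [u,v]
      have hm : StrictAntiOn f (Set.Icc u v) := hanti.mono hsub
      have hlt : f v < f u := hm hum hvm huv
      have hmid : ∀ y ∈ Set.Ioo (f v) (f u), Good l c f n y := by
        intro y hy
        obtain ⟨x, hx, rfl⟩ := intermediate_value_Ioo' huv.le hcf hy
        exact (hgood' x hx).2
      have hmaps : Set.MapsTo f (Set.Icc u v) (Set.Icc (f v) (f u)) :=
        fun x hx => ⟨hm.antitoneOn hx hvm hx.2, hm.antitoneOn hum hx hx.1⟩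
      rcases ih hfv.1 hfu.2 hlt hmid with hq | hq
      · right
        intro x hx y hy hxy
        rw [Function.iterate_succ_apply, Function.iterate_succ_apply]
        exact hq (hmaps hy) (hmaps hx) (hm hx hy hxy)
      · left
        intro x hx y hy hxy
        rw [Function.iterate_succ_apply, Function.iterate_succ_apply]
        exact hq (hmaps hy) (hmaps hx) (hm hx hy hxy)

/-- If between any two points of `A` there is a point of the finite set `B`,
then `A` is finite. -/
theorem finite_of_between {A B : Set ℝ} (hB : B.Finite)
    (hbtw : ∀ x ∈ A, ∀ y ∈ A, x < y → ∃ z ∈ B, x < z ∧ z < y) : A.Finite := by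
  classical
  have key : ∀ x ∈ A, ∀ y ∈ A, x < y →
      (hB.toFinset.filter (fun z => x < z)).min ≠ (hB.toFinset.filter (fun z => y < z)).min := by
    intro x hx y hy hlt heq
    obtain ⟨z, hzB, hxz, hzy⟩ := hbtw x hx y hy hlt
    have hmem : z ∈ hB.toFinset.filter (fun z => x < z) := by
      simp [hB.mem_toFinset, hzB, hxz]
    have h1 : (hB.toFinset.filter (fun z => x < z)).min ≤ (z : WithTop ℝ) := Finset.min_le hmem
    rw [heq] at h1
    rcases eq_or_ne ((hB.toFinset.filter (fun z => y < z)).min) ⊤ with htop | hne2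
    · rw [htop] at h1; exact absurd h1 (by simp)
    · obtain ⟨w', hw'⟩ := WithTop.ne_top_iff_exists.mp hne2
      have hw'mem : w' ∈ hB.toFinset.filter (fun z => y < z) := Finset.mem_of_min hw'.symm
      have hyw' : y < w' := (Finset.mem_filter.mp hw'mem).2
      rw [← hw'] at h1
      have h2 : w' ≤ z := by exact_mod_cast h1
      exact absurd (hyw'.trans_le h2) (not_lt.mpr hzy.le)
  have hinj : Set.InjOn (fun x => (hB.toFinset.filter (fun z => x < z)).min) A := by
    intro x hx y hy hxy
    by_contra hne
    rcases lt_or_gt_of_ne hne with hlt | hlt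
    · exact key x hx y hy hlt hxy
    · exact key y hy x hx hlt hxy.symm
  apply Set.Finite.of_finite_image ?_ hinj
  apply Set.Finite.subset
    (Set.Finite.insert ⊤ (Set.Finite.image (fun z : ℝ => (z : WithTop ℝ)) hB))
  rintro _ ⟨x, _, rfl⟩
  rcases eq_or_ne ((hB.toFinset.filter (fun z => x < z)).min) ⊤ with htop | hne2
  · simp only [Set.mem_insert_iff]
    exact Or.inl htop
  · obtain ⟨w, hw⟩ := WithTop.ne_top_iff_exists.mp hne2
    have hwm := Finset.mem_of_min hw.symm
    simp only [Set.mem_insert_iff]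
    exact Or.inr ⟨w, hB.mem_toFinset.mp (Finset.mem_filter.mp hwm).1, hw⟩

theorem left_gap {B : Set ℝ} (hB : B.Finite) {x a : ℝ} (hax : a < x) :
    ∃ z, a ≤ z ∧ z < x ∧ ∀ w ∈ B, w < x → w ≤ z := by
  classical
  set F : Finset ℝ := insert a (hB.toFinset.filter (fun w => w < x))
  have hne : F.Nonempty := ⟨a, Finset.mem_insert_self _ _⟩
  refine ⟨F.max' hne, Finset.le_max' F a (Finset.mem_insert_self _ _), ?_, ?_⟩
  · have hm := F.max'_mem hne
    rcases Finset.mem_insert.mp hm with heq | hmem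
    · exact lt_of_eq_of_lt heq hax
    · exact (Finset.mem_filter.mp hmem).2
  · intro w hw hwx
    exact Finset.le_max' F w (Finset.mem_insert.mpr (Or.inr (by
      simp [hB.mem_toFinset, hw, hwx])))

theorem right_gap {B : Set ℝ} (hB : B.Finite) {x b : ℝ} (hax : x < b) :
    ∃ z, z ≤ b ∧ x < z ∧ ∀ w ∈ B, x < w → z ≤ w := by
  classical
  set F : Finset ℝ := insert b (hB.toFinset.filter (fun w => x < w))
  have hne : F.Nonempty := ⟨b, Finset.mem_insert_self _ _⟩
  refine ⟨F.min' hne, Finset.min'_le F b (Finset.mem_insert_self _ _), ?_, ?_⟩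
  · have hm := F.min'_mem hne
    rcases Finset.mem_insert.mp hm with heq | hmem
    · exact lt_of_lt_of_eq hax heq.symm
    · exact (Finset.mem_filter.mp hmem).2
  · intro w hw hwx
    exact Finset.min'_le F w (Finset.mem_insert.mpr (Or.inr (by
      simp [hB.mem_toFinset, hw, hwx])))

theorem bad_finite (h : IsLModalWithShape a b l c f pos) :
    ∀ n, (badSet a b l c f n).Finite := by
  intro n
  induction n with
  | zero =>
    have : badSet a b l c f 0 = ∅ := by
      ext x
      simp [badSet, Good]
    rw [this]; exact Set.finite_empty
  | succ n ih =>
    have hsub : badSet a b l c f (n + 1) ⊆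
        badSet a b l c f n ∪ ⋃ j ∈ Finset.Icc 1 l,
          {x ∈ Set.Icc a b | Good l c f n x ∧ f^[n] x = c j} := by
      intro x hx
      obtain ⟨hxab, hbad⟩ := hx
      by_cases hg : Good l c f n x
      · right
        rw [Good] at hbad
        push_neg at hbad
        obtain ⟨k, hk, ht⟩ := hbad
        obtain ⟨j, hj1, hjl, hkj⟩ := ht
        have hkn : k = n := by
          by_contra hne
          exact hg k (by omega) ⟨j, hj1, hjl, hkj⟩
        subst hkn
        simp only [Set.mem_iUnion]
        exact ⟨j, by simp [Finset.mem_Icc, hj1, hjl], hxab, hg, hkj⟩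
      · exact Or.inl ⟨hxab, hg⟩
    refine Set.Finite.subset (ih.union ?_) hsub
    apply Set.Finite.biUnion (Finset.Icc 1 l).finite_toSet
    intro j _
    apply finite_of_between ih
    rintro x ⟨hxab, hgx, hfx⟩ y ⟨hyab, hgy, hfy⟩ hxy
    by_contra hno
    push_neg at hno
    have hgood : ∀ z ∈ Set.Ioo x y, Good l c f n z := by
      intro z hz
      by_contra hbz
      have hzab : z ∈ Set.Icc a b := ⟨hxab.1.trans hz.1.le, hz.2.le.trans hyab.2⟩
      exact absurd (hno z ⟨hzab, hbz⟩ hz.1) (not_le.mpr hz.2)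
    have := mono_of_good h n hxab.1 hyab.2 hxy hgood
    have hxm : x ∈ Set.Icc x y := Set.left_mem_Icc.2 hxy.le
    have hym : y ∈ Set.Icc x y := Set.right_mem_Icc.2 hxy.le
    rcases this with hm | hm
    · exact absurd (hfx.trans hfy.symm) (ne_of_lt (hm hxm hym hxy))
    · exact absurd (hfy.trans hfx.symm) (ne_of_lt (hm hxm hym hxy))

/-- A good interior point has a two-sided neighbourhood on which `f^[n]` is
strictly monotone. -/
theorem good_mono_nbhd (h : IsLModalWithShape a b l c f pos) {n : ℕ} {x : ℝ}
    (hx : x ∈ Set.Ioo a b) (hg : Good l c f n x) :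
    ∃ u v, u < x ∧ x < v ∧ Set.Icc u v ⊆ Set.Icc a b ∧
      (StrictMonoOn (f^[n]) (Set.Icc u v) ∨ StrictAntiOn (f^[n]) (Set.Icc u v)) := by
  obtain ⟨u, hau, hux, hu⟩ := left_gap (bad_finite h n) hx.1
  obtain ⟨v, hvb, hxv, hv⟩ := right_gap (bad_finite h n) hx.2
  have hgood : ∀ z ∈ Set.Ioo u v, Good l c f n z := by
    intro z hz
    by_contra hbz
    have hzab : z ∈ Set.Icc a b := ⟨hau.trans hz.1.le, hz.2.le.trans hvb⟩
    rcases lt_trichotomy z x with hlt | heq | hlt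
    · exact absurd (hu z ⟨hzab, hbz⟩ hlt) (not_le.mpr hz.1)
    · exact hbz (heq ▸ hg)
    · exact absurd (hv z ⟨hzab, hbz⟩ hlt) (not_le.mpr hz.2)
  exact ⟨u, v, hux, hxv, fun z hz => ⟨hau.trans hz.1, hz.2.trans hvb⟩,
    mono_of_good h n hau hvb (hux.trans hxv) hgood⟩

/-- A function strictly monotone on a two-sided neighbourhood has no local
extremum there. -/
theorem not_ext {g : ℝ → ℝ} {x u v : ℝ} (hu : u < x) (hv : x < v)
    (hsub : Set.Icc u v ⊆ Set.Icc a b)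
    (hm : StrictMonoOn g (Set.Icc u v) ∨ StrictAntiOn g (Set.Icc u v)) :
    ¬ (IsLocalMaxOn g (Set.Icc a b) x ∨ IsLocalMinOn g (Set.Icc a b) x) := by
  have hxm : x ∈ Set.Icc u v := ⟨hu.le, hv.le⟩
  have hner : (nhdsWithin x (Set.Ioo x v)).NeBot := by
    apply mem_closure_iff_nhdsWithin_neBot.1
    rw [closure_Ioo (ne_of_lt hv)]
    exact Set.left_mem_Icc.2 hv.le
  have hnel : (nhdsWithin x (Set.Ioo u x)).NeBot := by
    apply mem_closure_iff_nhdsWithin_neBot.1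
    rw [closure_Ioo (ne_of_lt hu)]
    exact Set.right_mem_Icc.2 hu.le
  have hsubr : Set.Ioo x v ⊆ Set.Icc a b := fun z hz => hsub ⟨hu.le.trans hz.1.le, hz.2.le⟩
  have hsubl : Set.Ioo u x ⊆ Set.Icc a b := fun z hz => hsub ⟨hz.1.le, hz.2.le.trans hv.le⟩
  rintro (hmax | hmin)
  · -- right side for mono, left side for anti
    rcases hm with hmono | hanti
    · have hev : ∀ᶠ y in nhdsWithin x (Set.Ioo x v), g y ≤ g x :=
        hmax.filter_mono (nhdsWithin_mono x hsubr)
      obtain ⟨y, hy1, hy2⟩ := (hev.and (eventually_mem_nhdsWithin)).exists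
      have : g x < g y := hmono hxm ⟨hu.le.trans hy2.1.le, hy2.2.le⟩ hy2.1
      exact absurd hy1 (not_le.mpr this)
    · have hev : ∀ᶠ y in nhdsWithin x (Set.Ioo u x), g y ≤ g x :=
        hmax.filter_mono (nhdsWithin_mono x hsubl)
      obtain ⟨y, hy1, hy2⟩ := (hev.and (eventually_mem_nhdsWithin)).exists
      have : g x < g y := hanti ⟨hy2.1.le, hy2.2.le.trans hv.le⟩ hxm hy2.2
      exact absurd hy1 (not_le.mpr this)
  · rcases hm with hmono | hanti
    · have hev : ∀ᶠ y in nhdsWithin x (Set.Ioo u x), g x ≤ g y :=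
        hmin.filter_mono (nhdsWithin_mono x hsubl)
      obtain ⟨y, hy1, hy2⟩ := (hev.and (eventually_mem_nhdsWithin)).exists
      have : g y < g x := hmono ⟨hy2.1.le, hy2.2.le.trans hv.le⟩ hxm hy2.2
      exact absurd hy1 (not_le.mpr this)
    · have hev : ∀ᶠ y in nhdsWithin x (Set.Ioo x v), g x ≤ g y :=
        hmin.filter_mono (nhdsWithin_mono x hsubr)
      obtain ⟨y, hy1, hy2⟩ := (hev.and (eventually_mem_nhdsWithin)).exists
      have : g y < g x := hanti hxm ⟨hu.le.trans hy2.1.le, hy2.2.le⟩ hy2.1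
      exact absurd hy1 (not_le.mpr this)

/-- Good interior points are not local extrema of `f^[n]`. -/
theorem no_ext_of_good (h : IsLModalWithShape a b l c f pos) {n : ℕ} {x : ℝ}
    (hx : x ∈ Set.Ioo a b) (hg : Good l c f n x) :
    ¬ (IsLocalMaxOn (f^[n]) (Set.Icc a b) x ∨ IsLocalMinOn (f^[n]) (Set.Icc a b) x) := by
  obtain ⟨u, v, hux, hxv, hsub, hm⟩ := good_mono_nbhd h hx hg
  exact not_ext hux hxv hsub hm

/-- One-sided composition lemma (max side): if `r` is continuous at `x` within
`[a,b]`, locally bounded above by its value `w = r x > a`, then composing with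
`f^[m]` yields a local extremum at `x`. -/
theorem ext_onesided_max (h : IsLModalWithShape a b l c f pos) {m : ℕ} {r : ℝ → ℝ} {x w : ℝ}
    (hcont : ContinuousWithinAt r (Set.Icc a b) x) (hrx : r x = w)
    (hw : a < w) (hwb : w ≤ b)
    (hN : ∀ᶠ y in nhdsWithin x (Set.Icc a b), r y ≤ w) :
    IsLocalMaxOn (f^[m] ∘ r) (Set.Icc a b) x ∨ IsLocalMinOn (f^[m] ∘ r) (Set.Icc a b) x := by
  obtain ⟨z, haz, hzw, hz⟩ := left_gap (bad_finite h m) hw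
  have hgood : ∀ y ∈ Set.Ioo z w, Good l c f m y := by
    intro y hy
    by_contra hby
    have hyab : y ∈ Set.Icc a b := ⟨haz.trans hy.1.le, hy.2.le.trans hwb⟩
    exact absurd (hz y ⟨hyab, hby⟩ hy.2) (not_le.mpr hy.1)
  have hq := mono_of_good h m haz hwb hzw hgood
  have hN2 : ∀ᶠ y in nhdsWithin x (Set.Icc a b), z < r y :=
    hcont.eventually (isOpen_Ioi.eventually_mem (show r x ∈ Set.Ioi z from hrx ▸ hzw))
  have hwm : w ∈ Set.Icc z w := Set.right_mem_Icc.2 hzw.le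
  rcases hq with hmono | hanti
  · left
    show ∀ᶠ y in nhdsWithin x (Set.Icc a b), (f^[m] ∘ r) y ≤ (f^[m] ∘ r) x
    filter_upwards [hN, hN2] with y h1 h2
    have : f^[m] (r y) ≤ f^[m] w := hmono.monotoneOn ⟨h2.le, h1⟩ hwm h1
    simpa [Function.comp, hrx] using this
  · right
    show ∀ᶠ y in nhdsWithin x (Set.Icc a b), (f^[m] ∘ r) x ≤ (f^[m] ∘ r) y
    filter_upwards [hN, hN2] with y h1 h2
    have : f^[m] w ≤ f^[m] (r y) := hanti.antitoneOn ⟨h2.le, h1⟩ hwm h1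
    simpa [Function.comp, hrx] using this

/-- One-sided composition lemma (min side). -/
theorem ext_onesided_min (h : IsLModalWithShape a b l c f pos) {m : ℕ} {r : ℝ → ℝ} {x w : ℝ}
    (hcont : ContinuousWithinAt r (Set.Icc a b) x) (hrx : r x = w)
    (hw : w < b) (hwa : a ≤ w)
    (hN : ∀ᶠ y in nhdsWithin x (Set.Icc a b), w ≤ r y) :
    IsLocalMaxOn (f^[m] ∘ r) (Set.Icc a b) x ∨ IsLocalMinOn (f^[m] ∘ r) (Set.Icc a b) x := by
  obtain ⟨z, hzb, hwz, hz⟩ := right_gap (bad_finite h m) hw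
  have hgood : ∀ y ∈ Set.Ioo w z, Good l c f m y := by
    intro y hy
    by_contra hby
    have hyab : y ∈ Set.Icc a b := ⟨hwa.trans hy.1.le, hy.2.le.trans hzb⟩
    exact absurd (hz y ⟨hyab, hby⟩ hy.1) (not_le.mpr hy.2)
  have hq := mono_of_good h m hwa hzb hwz hgood
  have hN2 : ∀ᶠ y in nhdsWithin x (Set.Icc a b), r y < z :=
    hcont.eventually (isOpen_Iio.eventually_mem (show r x ∈ Set.Iio z from hrx ▸ hwz))
  have hwm : w ∈ Set.Icc w z := Set.left_mem_Icc.2 hwz.le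
  rcases hq with hmono | hanti
  · right
    show ∀ᶠ y in nhdsWithin x (Set.Icc a b), (f^[m] ∘ r) x ≤ (f^[m] ∘ r) y
    filter_upwards [hN, hN2] with y h1 h2
    have : f^[m] w ≤ f^[m] (r y) := hmono.monotoneOn hwm ⟨h1, h2.le⟩ h1
    simpa [Function.comp, hrx] using this
  · left
    show ∀ᶠ y in nhdsWithin x (Set.Icc a b), (f^[m] ∘ r) y ≤ (f^[m] ∘ r) x
    filter_upwards [hN, hN2] with y h1 h2
    have : f^[m] (r y) ≤ f^[m] w := hanti.antitoneOn hwm ⟨h1, h2.le⟩ h1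
    simpa [Function.comp, hrx] using this

/-- Interior points whose orbit hits a turning point before time `n` are local
extrema of `f^[n]`. -/
theorem ext_of_bad (h : IsLModalWithShape a b l c f pos) {n : ℕ} {x : ℝ}
    (hx : x ∈ Set.Ioo a b) (hb : ¬ Good l c f n x) :
    IsLocalMaxOn (f^[n]) (Set.Icc a b) x ∨ IsLocalMinOn (f^[n]) (Set.Icc a b) x := by
  classical
  rw [Good] at hb
  push_neg at hb
  obtain ⟨k0, hk0n, hk0⟩ := hb
  have hexists : ∃ k, IsTurn l c (f^[k] x) := ⟨k0, hk0⟩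
  set k := Nat.find hexists with hkdef
  have hkturn : IsTurn l c (f^[k] x) := Nat.find_spec hexists
  have hkn : k < n := lt_of_le_of_lt (Nat.find_min' hexists hk0) hk0n
  have hgk : Good l c f k x := fun m hm ht => Nat.find_min hexists hm ht
  obtain ⟨j, hj1, hjl, hcj⟩ := hkturn
  have hj' : j - 1 + 1 = j := by omega
  have hxab : x ∈ Set.Icc a b := Set.Ioo_subset_Icc_self hx
  have hcj1l : c (j - 1) < c j := by
    have := c_lt h (j - 1) j (by omega) (by omega)
    exact this
  have hcjr : c j < c (j + 1) := c_lt h j (j + 1) (by omega) (by omega)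
  have hcjab : c j ∈ Set.Ioo a b := c_mem_Ioo h hj1 hjl
  have hc1ab : c (j - 1) ∈ Set.Icc a b := c_mem_Icc h (by omega)
  have hc2ab : c (j + 1) ∈ Set.Icc a b := c_mem_Icc h (by omega)
  -- shape at the turning point c j
  have hlapj := h.2.2.2.2.2.2 j hjl
  have hlapj1 := h.2.2.2.2.2.2 (j - 1) (le_trans (Nat.sub_le j 1) hjl)
  have hparity : Even j ↔ ¬ Even (j - 1) := by
    conv_lhs => rw [← hj']
    exact Nat.even_add_one
  have hshape :
      ((∀ y ∈ Set.Icc (c (j - 1)) (c (j + 1)), f y ≤ f (c j)) ∧ a < f (c j)) ∨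
      ((∀ y ∈ Set.Icc (c (j - 1)) (c (j + 1)), f (c j) ≤ f y) ∧ f (c j) < b) := by
    by_cases hE : Even j ↔ pos = true
    · -- f decreasing then increasing?  No: Even j ↔ pos means mono on lap j, anti on lap (j-1)
      have hr : StrictMonoOn f (Set.Icc (c j) (c (j + 1))) := hlapj.1 hE
      have hl : StrictAntiOn f (Set.Icc (c (j - 1)) (c ((j - 1) + 1))) :=
        hlapj1.2 (by rw [hparity] at hE; tauto)
      rw [hj'] at hl
      right
      constructor
      · intro y hy
        rcases le_total y (c j) with hyc | hyc
        · exact hl.antitoneOn ⟨hy.1, hyc⟩ ⟨hcj1l.le, le_rfl⟩ hyc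
        · exact hr.monotoneOn ⟨le_rfl, hcjr.le⟩ ⟨hyc, hy.2⟩ hyc
      · have h1 : f (c j) < f (c (j + 1)) :=
          hr ⟨le_rfl, hcjr.le⟩ ⟨hcjr.le, le_rfl⟩ hcjr
        exact lt_of_lt_of_le h1 (h.2.2.2.2.1 hc2ab).2
    · have hr : StrictAntiOn f (Set.Icc (c j) (c (j + 1))) := hlapj.2 hE
      have hl : StrictMonoOn f (Set.Icc (c (j - 1)) (c ((j - 1) + 1))) :=
        hlapj1.1 (by rw [hparity] at hE; tauto)
      rw [hj'] at hl
      left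
      constructor
      · intro y hy
        rcases le_total y (c j) with hyc | hyc
        · exact hl.monotoneOn ⟨hy.1, hyc⟩ ⟨hcj1l.le, le_rfl⟩ hyc
        · exact hr.antitoneOn ⟨le_rfl, hcjr.le⟩ ⟨hyc, hy.2⟩ hyc
      · have h1 : f (c (j + 1)) < f (c j) :=
          hr ⟨le_rfl, hcjr.le⟩ ⟨hcjr.le, le_rfl⟩ hcjr
        exact lt_of_le_of_lt (h.2.2.2.2.1 hc2ab).1 h1
  -- the neighbourhood where f^[k] stays in the double lap
  have hcontk : ContinuousWithinAt (f^[k]) (Set.Icc a b) x := (cont_iter h k) x hxab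
  have hNlap : ∀ᶠ y in nhdsWithin x (Set.Icc a b),
      f^[k] y ∈ Set.Ioo (c (j - 1)) (c (j + 1)) := by
    apply hcontk.eventually
    apply isOpen_Ioo.eventually_mem
    rw [hcj]
    exact ⟨hcj1l, hcjr⟩
  set w := f (c j) with hwdef
  have hrx : f^[k + 1] x = w := by rw [Function.iterate_succ_apply', hcj]
  have hcontk1 : ContinuousWithinAt (f^[k + 1]) (Set.Icc a b) x := (cont_iter h (k + 1)) x hxab
  have hwab : w ∈ Set.Icc a b := h.2.2.2.2.1 (Set.Ioo_subset_Icc_self hcjab)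
  have hiter : f^[n] = f^[n - (k + 1)] ∘ f^[k + 1] := by
    rw [← Function.iterate_add]
    have hnk : n - (k + 1) + (k + 1) = n := by omega
    rw [hnk]
  rcases hshape with ⟨hpk, hwa⟩ | ⟨hpk, hwb⟩
  · have hN : ∀ᶠ y in nhdsWithin x (Set.Icc a b), f^[k + 1] y ≤ w := by
      filter_upwards [hNlap] with y hy
      rw [Function.iterate_succ_apply']
      exact hpk _ (Set.Ioo_subset_Icc_self hy)
    have := ext_onesided_max h (m := n - (k + 1)) hcontk1 hrx hwa hwab.2 hN
    rwa [← hiter] at this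
  · have hN : ∀ᶠ y in nhdsWithin x (Set.Icc a b), w ≤ f^[k + 1] y := by
      filter_upwards [hNlap] with y hy
      rw [Function.iterate_succ_apply']
      exact hpk _ (Set.Ioo_subset_Icc_self hy)
    have := ext_onesided_min h (m := n - (k + 1)) hcontk1 hrx hwb hwab.1 hN
    rwa [← hiter] at this

theorem good_iff {n : ℕ} {x : ℝ} :
    Good l c f n x ↔ ∀ k < n, ∀ j, 1 ≤ j → j ≤ l → f^[k] x ≠ c j := by
  constructor
  · intro H k hk j h1 h2 heq
    exact H k hk ⟨j, h1, h2, heq⟩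
  · rintro H k hk ⟨j, h1, h2, heq⟩
    exact H k hk j h1 h2 heq

theorem good_mono {n m : ℕ} {x : ℝ} (hnm : n ≤ m) (hg : Good l c f m x) :
    Good l c f n x :=
  fun k hk => hg k (lt_of_lt_of_le hk hnm)

theorem not_good_succ_iff {n : ℕ} {x : ℝ} (hg : Good l c f n x) :
    ¬ Good l c f (n + 1) x ↔ IsTurn l c (f^[n] x) := by
  constructor
  · intro hng
    rw [Good] at hng
    push_neg at hng
    obtain ⟨k, hk, ht⟩ := hng
    rcases Nat.lt_or_ge k n with hkn | hkn
    · exact absurd ht (hg k hkn)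
    · have : k = n := by omega
      exact this ▸ ht
  · intro ht hgood
    exact hgood n (Nat.lt_succ_self n) ht

end LModalAux

open LModalAux

/-- For an `l`-modal map `f`, with `e_n` the number of interior local extrema of
`f^n` and `s_n` the number of interior points falling on a turning point exactly
at time `n`, both sets are finite, `e_{n+1} = e_n + s_n` for all `n ≥ 1`, and
`e₁ = l`. -/
theorem lap_extrema_recursion (a b : ℝ) (l : ℕ) (c : ℕ → ℝ) (f : ℝ → ℝ)
    (hf : IsLModal a b l c f)
    (E : ℕ → Set ℝ) (S : ℕ → Set ℝ)
    (hE : ∀ n, E n = {x ∈ Set.Ioo a b |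
      IsLocalMaxOn (f^[n]) (Set.Icc a b) x ∨ IsLocalMinOn (f^[n]) (Set.Icc a b) x})
    (hS : ∀ n, S n = {x ∈ Set.Ioo a b |
      (∃ i, 1 ≤ i ∧ i ≤ l ∧ f^[n] x = c i) ∧
      ∀ k < n, ∀ j, 1 ≤ j → j ≤ l → f^[k] x ≠ c j}) :
    (∀ n, 1 ≤ n → (E n).Finite ∧ (S n).Finite ∧
      (E (n + 1)).ncard = (E n).ncard + (S n).ncard) ∧
    (E 1).ncard = l := by
  classical
  obtain ⟨pos, h⟩ := hf
  have hEH : ∀ n, E n = {x ∈ Set.Ioo a b | ¬ Good l c f n x} := by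
    intro n
    rw [hE n]
    ext x
    constructor
    · rintro ⟨hx, hext⟩
      exact ⟨hx, fun hg => no_ext_of_good h hx hg hext⟩
    · rintro ⟨hx, hbad⟩
      exact ⟨hx, ext_of_bad h hx hbad⟩
  have hfinE : ∀ n, (E n).Finite := by
    intro n
    rw [hEH n]
    apply (bad_finite h n).subset
    rintro x ⟨hx, hbad⟩
    exact ⟨Set.Ioo_subset_Icc_self hx, hbad⟩
  have hSdiff : ∀ n, S n = E (n + 1) \ E n := by
    intro n
    rw [hS n, hEH n, hEH (n + 1)]
    ext x
    simp only [Set.mem_setOf_eq, Set.mem_diff, not_and, not_not]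
    constructor
    · rintro ⟨hx, ht, hgood⟩
      have hg : Good l c f n x := good_iff.mpr hgood
      refine ⟨⟨hx, ?_⟩, fun _ => hg⟩
      exact (not_good_succ_iff hg).mpr ht
    · rintro ⟨⟨hx, hng⟩, hgood'⟩
      have hg : Good l c f n x := hgood' hx
      exact ⟨hx, (not_good_succ_iff hg).mp hng, good_iff.mp hg⟩
  have hEsub : ∀ n, E n ⊆ E (n + 1) := by
    intro n
    rw [hEH n, hEH (n + 1)]
    rintro x ⟨hx, hbad⟩
    exact ⟨hx, fun hg => hbad (good_mono (Nat.le_succ n) hg)⟩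
  constructor
  · intro n _
    have hfS : (S n).Finite := by
      rw [hSdiff n]
      exact (hfinE (n + 1)).diff
    refine ⟨hfinE n, hfS, ?_⟩
    have hunion : E (n + 1) = E n ∪ S n := by
      rw [hSdiff n, Set.union_diff_cancel (hEsub n)]
    rw [hunion, Set.ncard_union_eq ?_ (hfinE n) hfS]
    rw [hSdiff n]
    exact Set.disjoint_sdiff_right
  · have hE1 : E 1 = c '' (Set.Icc 1 l) := by
      rw [hEH 1]
      ext x
      constructor
      · rintro ⟨hx, hbad⟩
        have hg0 : ¬ Good l c f 1 x := hbad
        have ht : IsTurn l c (f^[0] x) := by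
          rw [not_good_succ_iff (fun k hk => absurd hk (by omega))] at hg0
          exact hg0
        obtain ⟨j, hj1, hjl, hcj⟩ := ht
        exact ⟨j, ⟨hj1, hjl⟩, by simpa using hcj.symm⟩
      · rintro ⟨j, ⟨hj1, hjl⟩, rfl⟩
        refine ⟨c_mem_Ioo h hj1 hjl, ?_⟩
        intro hg
        exact hg 0 (by omega) ⟨j, hj1, hjl, by simp⟩
    rw [hE1, Set.ncard_image_of_injOn, ← Finset.coe_Icc, Set.ncard_coe_finset,
      Nat.card_Icc]
    · omega
    · intro i hi j hj hij
      by_contra hne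
      rcases lt_or_gt_of_ne hne with hlt | hlt
      · exact absurd hij (ne_of_lt (c_lt h i j hlt (Nat.le_succ_of_le hj.2)))
      · exact absurd hij.symm (ne_of_lt (c_lt h j i hlt (Nat.le_succ_of_le hi.2)))
end

section
/- Let f : [a,b] → [a,b] be an l-modal map with turning points c₁ < ⋯ < c_l and positive shape, let n ≥ 1 and x ∈ (a,b). Then f^{n+1} has a local maximum at x if any of the following holds: (i) f^n(x) = c_i for some odd index i; (ii) f^n(x) lies in the open interval (c_{i−1}, c_i) (reading c₀ = a, c_{l+1} = b) for some even index i and f^n has a local minimum at x; (iii) f^n(x) lies in the open interval corresponding to an odd index i and f^n has a local maximum at x. Dually, f^{n+1} has a local minimum at x if: (i') f^n(x) = c_i for some even index i; (ii') f^n(x) lies in the open interval with odd index i and f^n has a local minimum at x; or (iii') f^n(x) lies in the open interval with even index i and f^n has a local maximum at x. -/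
open Set Filter

private lemma aux_ev {F : ℝ → ℝ} {S : Set ℝ} {x u v : ℝ}
    (hc : ContinuousWithinAt F S x) (hFx : F x ∈ Set.Ioo u v) :
    ∀ᶠ y in nhdsWithin x S, F y ∈ Set.Ioo u v :=
  hc (Ioo_mem_nhds hFx.1 hFx.2)

private lemma aux_peak {F g : ℝ → ℝ} {S : Set ℝ} {x u v : ℝ}
    (hc : ContinuousWithinAt F S x) (hFx : F x ∈ Set.Ioo u v)
    (hg : ∀ z ∈ Set.Icc u v, g z ≤ g (F x)) :
    IsLocalMaxOn (g ∘ F) S x := by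
  filter_upwards [aux_ev hc hFx] with y hy
  exact hg _ (Set.Ioo_subset_Icc_self hy)

private lemma aux_valley {F g : ℝ → ℝ} {S : Set ℝ} {x u v : ℝ}
    (hc : ContinuousWithinAt F S x) (hFx : F x ∈ Set.Ioo u v)
    (hg : ∀ z ∈ Set.Icc u v, g (F x) ≤ g z) :
    IsLocalMinOn (g ∘ F) S x := by
  filter_upwards [aux_ev hc hFx] with y hy
  exact hg _ (Set.Ioo_subset_Icc_self hy)

private lemma aux_mono_max {F g : ℝ → ℝ} {S : Set ℝ} {x u v : ℝ}
    (hc : ContinuousWithinAt F S x) (hFx : F x ∈ Set.Ioo u v)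
    (hg : MonotoneOn g (Set.Icc u v)) (hm : IsLocalMaxOn F S x) :
    IsLocalMaxOn (g ∘ F) S x := by
  filter_upwards [aux_ev hc hFx, hm] with y hy hle
  exact hg (Set.Ioo_subset_Icc_self hy) (Set.Ioo_subset_Icc_self hFx) hle

private lemma aux_mono_min {F g : ℝ → ℝ} {S : Set ℝ} {x u v : ℝ}
    (hc : ContinuousWithinAt F S x) (hFx : F x ∈ Set.Ioo u v)
    (hg : MonotoneOn g (Set.Icc u v)) (hm : IsLocalMinOn F S x) :
    IsLocalMinOn (g ∘ F) S x := by
  filter_upwards [aux_ev hc hFx, hm] with y hy hle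
  exact hg (Set.Ioo_subset_Icc_self hFx) (Set.Ioo_subset_Icc_self hy) hle

private lemma aux_anti_max {F g : ℝ → ℝ} {S : Set ℝ} {x u v : ℝ}
    (hc : ContinuousWithinAt F S x) (hFx : F x ∈ Set.Ioo u v)
    (hg : AntitoneOn g (Set.Icc u v)) (hm : IsLocalMaxOn F S x) :
    IsLocalMinOn (g ∘ F) S x := by
  filter_upwards [aux_ev hc hFx, hm] with y hy hle
  exact hg (Set.Ioo_subset_Icc_self hy) (Set.Ioo_subset_Icc_self hFx) hle

private lemma aux_anti_min {F g : ℝ → ℝ} {S : Set ℝ} {x u v : ℝ}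
    (hc : ContinuousWithinAt F S x) (hFx : F x ∈ Set.Ioo u v)
    (hg : AntitoneOn g (Set.Icc u v)) (hm : IsLocalMinOn F S x) :
    IsLocalMaxOn (g ∘ F) S x := by
  filter_upwards [aux_ev hc hFx, hm] with y hy hle
  exact hg (Set.Ioo_subset_Icc_self hFx) (Set.Ioo_subset_Icc_self hy) hle

/-- Local max/min propagation for iterates of an `l`-modal map of positive shape:
`f^{n+1}` has a local maximum at `x` if (i) `f^n(x)` is a turning point of odd
index, (ii) `f^n(x)` lies in an open lap of even index and `f^n` has a local
minimum at `x`, or (iii) `f^n(x)` lies in an open lap of odd index and `f^n` has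
a local maximum at `x`; and dually for local minima. -/
theorem iterate_local_extrema_rules (a b : ℝ) (l : ℕ) (c : ℕ → ℝ) (f : ℝ → ℝ)
    (hf : IsLModalWithShape a b l c f true) (n : ℕ) (hn : 1 ≤ n)
    (x : ℝ) (hx : x ∈ Set.Ioo a b) :
    -- f^{n+1} has a local maximum at x in each of the three cases:
    ((∀ i, 1 ≤ i → i ≤ l → Odd i → f^[n] x = c i →
        IsLocalMaxOn (f^[n + 1]) (Set.Icc a b) x) ∧
     (∀ i, 1 ≤ i → i ≤ l + 1 → Even i → f^[n] x ∈ Set.Ioo (c (i - 1)) (c i) →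
        IsLocalMinOn (f^[n]) (Set.Icc a b) x →
        IsLocalMaxOn (f^[n + 1]) (Set.Icc a b) x) ∧
     (∀ i, 1 ≤ i → i ≤ l + 1 → Odd i → f^[n] x ∈ Set.Ioo (c (i - 1)) (c i) →
        IsLocalMaxOn (f^[n]) (Set.Icc a b) x →
        IsLocalMaxOn (f^[n + 1]) (Set.Icc a b) x)) ∧
    -- f^{n+1} has a local minimum at x in each of the three dual cases:
    ((∀ i, 1 ≤ i → i ≤ l → Even i → f^[n] x = c i →
        IsLocalMinOn (f^[n + 1]) (Set.Icc a b) x) ∧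
     (∀ i, 1 ≤ i → i ≤ l + 1 → Odd i → f^[n] x ∈ Set.Ioo (c (i - 1)) (c i) →
        IsLocalMinOn (f^[n]) (Set.Icc a b) x →
        IsLocalMinOn (f^[n + 1]) (Set.Icc a b) x) ∧
     (∀ i, 1 ≤ i → i ≤ l + 1 → Even i → f^[n] x ∈ Set.Ioo (c (i - 1)) (c i) →
        IsLocalMaxOn (f^[n]) (Set.Icc a b) x →
        IsLocalMinOn (f^[n + 1]) (Set.Icc a b) x)) := by
  obtain ⟨hl, hc0, hcl, hcs, hmaps, hcont, hlap⟩ := hf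
  have hxI : x ∈ Set.Icc a b := Set.Ioo_subset_Icc_self hx
  have contn' : ∀ m, ContinuousOn f^[m] (Set.Icc a b) := by
    intro m
    induction m with
    | zero => simpa using continuousOn_id
    | succ k ih =>
      rw [Function.iterate_succ']
      exact hcont.comp ih (hmaps.iterate k)
  have contn : ContinuousOn f^[n] (Set.Icc a b) := contn' n
  have hcw : ContinuousWithinAt f^[n] (Set.Icc a b) x := contn x hxI
  have lapMono : ∀ j ≤ l, Even j → StrictMonoOn f (Set.Icc (c j) (c (j + 1))) :=
    fun j hj hje => (hlap j hj).1 (by simp [hje])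
  have lapAnti : ∀ j ≤ l, ¬Even j → StrictAntiOn f (Set.Icc (c j) (c (j + 1))) :=
    fun j hj hje => (hlap j hj).2 (by simp [hje])
  -- Case (i): turning point, i odd
  have case1 : ∀ i, 1 ≤ i → i ≤ l → Odd i → f^[n] x = c i →
      IsLocalMaxOn (f^[n + 1]) (Set.Icc a b) x := by
    intro i h1 h2 hodd heq
    obtain ⟨k, hk⟩ := hodd
    have hev : Even (i - 1) := ⟨k, by omega⟩
    have he1 : i - 1 + 1 = i := by omega
    have hmono := lapMono (i - 1) (by omega) hev
    rw [he1] at hmono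
    have hanti := lapAnti i h2 (by rintro ⟨m, hm⟩; omega)
    have hlt1 : c (i - 1) < c i := by
      have := hcs (i - 1) (by omega); rwa [he1] at this
    have hlt2 : c i < c (i + 1) := hcs i h2
    rw [Function.iterate_succ']
    refine aux_peak hcw (by rw [heq]; exact ⟨hlt1, hlt2⟩) ?_
    intro z hz
    rw [heq]
    rcases le_total z (c i) with hzc | hzc
    · exact hmono.monotoneOn ⟨hz.1, hzc⟩ ⟨hlt1.le, le_refl _⟩ hzc
    · exact hanti.antitoneOn ⟨le_refl _, hlt2.le⟩ ⟨hzc, hz.2⟩ hzc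
  -- Case (i'): turning point, i even
  have case1' : ∀ i, 1 ≤ i → i ≤ l → Even i → f^[n] x = c i →
      IsLocalMinOn (f^[n + 1]) (Set.Icc a b) x := by
    intro i h1 h2 hev heq
    obtain ⟨k, hk⟩ := hev
    have hodd1 : ¬Even (i - 1) := by rintro ⟨m, hm⟩; omega
    have he1 : i - 1 + 1 = i := by omega
    have hanti := lapAnti (i - 1) (by omega) hodd1
    rw [he1] at hanti
    have hmono := lapMono i h2 ⟨k, hk⟩
    have hlt1 : c (i - 1) < c i := by
      have := hcs (i - 1) (by omega); rwa [he1] at this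
    have hlt2 : c i < c (i + 1) := hcs i h2
    rw [Function.iterate_succ']
    refine aux_valley hcw (by rw [heq]; exact ⟨hlt1, hlt2⟩) ?_
    intro z hz
    rw [heq]
    rcases le_total z (c i) with hzc | hzc
    · exact hanti.antitoneOn ⟨hz.1, hzc⟩ ⟨hlt1.le, le_refl _⟩ hzc
    · exact hmono.monotoneOn ⟨le_refl _, hlt2.le⟩ ⟨hzc, hz.2⟩ hzc
  -- lap membership facts for inner cases
  have lapM : ∀ i, 1 ≤ i → i ≤ l + 1 → Even (i - 1) →
      MonotoneOn f (Set.Icc (c (i - 1)) (c i)) := by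
    intro i h1 h2 hev
    have := (lapMono (i - 1) (by omega) hev).monotoneOn
    rwa [show i - 1 + 1 = i by omega] at this
  have lapA : ∀ i, 1 ≤ i → i ≤ l + 1 → ¬Even (i - 1) →
      AntitoneOn f (Set.Icc (c (i - 1)) (c i)) := by
    intro i h1 h2 hev
    have := (lapAnti (i - 1) (by omega) hev).antitoneOn
    rwa [show i - 1 + 1 = i by omega] at this
  refine ⟨⟨case1, ?_, ?_⟩, ⟨case1', ?_, ?_⟩⟩
  · -- (ii): i even, f anti on lap, local min → local max
    intro i h1 h2 hev hmem hmin
    obtain ⟨k, hk⟩ := hev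
    rw [Function.iterate_succ']
    exact aux_anti_min hcw hmem (lapA i h1 h2 (by rintro ⟨m, hm⟩; omega)) hmin
  · -- (iii): i odd, f mono on lap, local max → local max
    intro i h1 h2 hodd hmem hmax
    obtain ⟨k, hk⟩ := hodd
    rw [Function.iterate_succ']
    exact aux_mono_max hcw hmem (lapM i h1 h2 ⟨k, by omega⟩) hmax
  · -- (ii'): i odd, f mono on lap, local min → local min
    intro i h1 h2 hodd hmem hmin
    obtain ⟨k, hk⟩ := hodd
    rw [Function.iterate_succ']
    exact aux_mono_min hcw hmem (lapM i h1 h2 ⟨k, by omega⟩) hmin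
  · -- (iii'): i even, f anti on lap, local max → local min
    intro i h1 h2 hev hmem hmax
    obtain ⟨k, hk⟩ := hev
    rw [Function.iterate_succ']
    exact aux_anti_max hcw hmem (lapA i h1 h2 (by rintro ⟨m, hm⟩; omega)) hmax
end

section
/- Let σ = (σ₁,…,σ_n) ∈ {+1,−1}^n and let t ∈ [0,2] belong to the definition domain of the root branch φ_σ. Then the derivative of the polynomial x ↦ q_t^n(x) vanishes at the point x = φ_σ(t) if and only if φ_{(σ_{k+1},…,σ_n)}(t) = 0 for some 0 ≤ k ≤ n−1 (where for k = 0 this means φ_σ(t) = 0). In particular, the singular parameters of a root branch are exactly those at which the corresponding zero of q_t^n is a multiple zero. -/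
/-- The quadratic map `q_t(x) = t - x^2`. -/
noncomputable def q (t x : ℝ) : ℝ := t - x ^ 2

/-- The root branch `φ_σ(t)` associated with a sign sequence `σ = (σ₁, …, σ_n)`
(encoded as a list of reals, each `±1`, with head `σ₁`), defined recursively by
`φ_{[]}(t) = 0` and `φ_{σ₁ :: ρ}(t) = σ₁ · √(t + φ_ρ(t))`; thus
`φ_σ(t) = σ₁√(t + σ₂√(t + ⋯ + σ_n√t))`. -/
noncomputable def phi : List ℝ → ℝ → ℝ
  | [], _ => 0
  | s :: rest, t => s * Real.sqrt (t + phi rest t)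

/-- `σ` is a sequence of signs `±1`. -/
def IsSigns (σ : List ℝ) : Prop := ∀ s ∈ σ, s = 1 ∨ s = -1

/-- `t` belongs to the definition domain of `φ_σ`: `t ≥ 0` and every radicand
`t + φ_ρ(t)`, for `ρ` a proper suffix of `σ`, is nonnegative. -/
def InDom (σ : List ℝ) (t : ℝ) : Prop :=
  0 ≤ t ∧ ∀ ρ : List ℝ, ρ <:+ σ → ρ ≠ σ → 0 ≤ t + phi ρ t

/-- `t` is a regular point of `φ_σ`: `t` is in the definition domain and
`φ_ρ(t) ≠ 0` for every nonempty suffix `ρ` of `σ` (including `σ` itself). -/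
def IsRegularPt (σ : List ℝ) (t : ℝ) : Prop :=
  InDom σ t ∧ ∀ ρ : List ℝ, ρ <:+ σ → ρ ≠ [] → phi ρ t ≠ 0

lemma q_neg (t x : ℝ) : q t (-x) = q t x := by simp [q]

lemma diff_q (t : ℝ) : Differentiable ℝ (q t) := by unfold q; fun_prop

lemma deriv_q (t x : ℝ) : deriv (q t) x = -2 * x := by
  unfold q
  rw [deriv_const_sub]
  simp

lemma diff_iter (t : ℝ) (n : ℕ) : Differentiable ℝ ((q t)^[n]) := by
  induction n with
  | zero => simpa using differentiable_id
  | succ n ih => rw [Function.iterate_succ']; exact (diff_q t).comp ih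

lemma deriv_iter (t : ℝ) (n : ℕ) (x : ℝ) :
    deriv ((q t)^[n]) x = ∏ k ∈ Finset.range n, (-2 * (q t)^[k] x) := by
  induction n with
  | zero => simp
  | succ n ih =>
    rw [Function.iterate_succ', deriv_comp x ((diff_q t).differentiableAt)
      ((diff_iter t n).differentiableAt), deriv_q, ih, Finset.prod_range_succ]
    ring

lemma q_step (t s : ℝ) (ρ : List ℝ) (hs : s = 1 ∨ s = -1) (hrad : 0 ≤ t + phi ρ t) :
    q t (phi (s :: ρ) t) = - phi ρ t := by
  have : (s * Real.sqrt (t + phi ρ t)) ^ 2 = t + phi ρ t := by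
    rw [mul_pow, Real.sq_sqrt hrad]
    rcases hs with h | h <;> rw [h] <;> ring
  simp [q, phi, this]

/-- For `σ ∈ {±1}^n` and `t ∈ [0,2]` in the definition domain of `φ_σ`, the
derivative of `q_t^n` vanishes at `φ_σ(t)` if and only if some root branch
`φ_ρ(t)`, for a nonempty suffix `ρ` of `σ`, vanishes at `t`: singular
parameters of a root branch are exactly those where the corresponding zero of
`q_t^n` is a multiple zero. -/
theorem deriv_iterate_eq_zero_iff_suffix_branch_vanishes
    (σ : List ℝ) (hσ : IsSigns σ) (hne : σ ≠ [])
    (t : ℝ) (ht : t ∈ Set.Icc (0 : ℝ) 2) (hdom : InDom σ t) :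
    deriv (fun x => (q t)^[σ.length] x) (phi σ t) = 0 ↔
      ∃ ρ : List ℝ, ρ <:+ σ ∧ ρ ≠ [] ∧ phi ρ t = 0 := by
  obtain ⟨ht0, hrad⟩ := hdom
  -- every suffix radicand nonneg, including []
  have hrad' : ∀ ρ : List ℝ, ρ <:+ σ → ρ ≠ σ → 0 ≤ t + phi ρ t := hrad
  have key : ∀ k, k ≤ σ.length →
      ((q t)^[k] (phi σ t) = phi (σ.drop k) t ∨
       (q t)^[k] (phi σ t) = -(phi (σ.drop k) t)) := by
    intro k
    induction k with
    | zero => intro _; left; simp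
    | succ k ih =>
      intro hk
      have hk' : k ≤ σ.length := Nat.le_of_succ_le hk
      have hlt : k < σ.length := hk
      obtain ⟨s, ρ, hsr⟩ : ∃ s ρ, σ.drop k = s :: ρ := by
        cases h : σ.drop k with
        | nil =>
          exfalso
          have := List.drop_eq_nil_iff.mp h
          omega
        | cons a l => exact ⟨a, l, rfl⟩
      have hρ : σ.drop (k + 1) = ρ := by
        rw [← List.tail_drop, hsr, List.tail_cons]
      have hs : s = 1 ∨ s = -1 := by
        apply hσ
        have : s ∈ σ.drop k := by rw [hsr]; exact List.mem_cons_self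
        exact List.mem_of_mem_drop this
      have hrρ : 0 ≤ t + phi ρ t := by
        rcases eq_or_ne ρ [] with h | h
        · simp [h, phi, ht0]
        · apply hrad' ρ
          · rw [← hρ]; exact List.drop_suffix _ _
          · intro hcon
            have h1 : ρ.length = σ.length := by rw [hcon]
            have h2 : (σ.drop (k+1)).length = σ.length - (k+1) := List.length_drop
            rw [hρ] at h2
            omega
      rw [Function.iterate_succ_apply']
      rcases ih hk' with h | h <;> rw [h, hρ] <;> [skip; rw [q_neg]] <;>
        · rw [hsr, q_step t s ρ hs hrρ]
          right; rfl
  rw [deriv_iter]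
  rw [Finset.prod_eq_zero_iff]
  constructor
  · rintro ⟨k, hk, hzero⟩
    have hk' : k < σ.length := Finset.mem_range.mp hk
    have h0 : (q t)^[k] (phi σ t) = 0 := by
      rcases mul_eq_zero.mp hzero with h | h
      · norm_num at h
      · exact h
    refine ⟨σ.drop k, List.drop_suffix _ _, ?_, ?_⟩
    · intro hcon
      have := List.drop_eq_nil_iff.mp hcon
      omega
    · rcases key k (le_of_lt hk') with h | h
      · rw [← h, h0]
      · rw [← neg_eq_zero, ← h, h0]
  · rintro ⟨ρ, ⟨pre, hpre⟩, hρne, hρ0⟩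
    refine ⟨pre.length, ?_, ?_⟩
    · apply Finset.mem_range.mpr
      have : σ.length = pre.length + ρ.length := by rw [← hpre]; simp
      have : 0 < ρ.length := List.length_pos_iff.mpr hρne
      omega
    · have hd : σ.drop pre.length = ρ := by rw [← hpre, List.drop_left]
      have hle : pre.length ≤ σ.length := by
        have : σ.length = pre.length + ρ.length := by rw [← hpre]; simp
        omega
      rcases key pre.length hle with h | h <;> rw [h, hd, hρ0] <;> simp
end

section
/- Let σ = (σ₁,…,σ_s) ∈ {+1,−1}^s and ρ = (ρ₁,…,ρ_r) ∈ {+1,−1}^r with s ≥ r and σ ≠ ρ, and let t₀ belong to the definition domains of both φ_σ and φ_ρ with φ_σ(t₀) = φ_ρ(t₀). Then: (a) if there is an index 1 ≤ i ≤ r with σ_i ≠ ρ_i, and i is the smallest such index, then φ_{(σ_i,…,σ_s)}(t₀) = φ_{(ρ_i,…,ρ_r)}(t₀) = 0; (b) if σ_i = ρ_i for all 1 ≤ i ≤ r (so s > r), then φ_{(σ_{r+1},…,σ_s)}(t₀) = 0. Consequently, two distinct root branches can take the same value at t₀ only if some suffix root branch vanishes at t₀. -/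
lemma drop_ne' (σ : List ℝ) (j : ℕ) (hj : j < σ.length) : σ.drop (j+1) ≠ σ := by
  intro h
  have := congrArg List.length h
  simp [List.length_drop] at this
  omega

lemma radicand_nonneg' (σ : List ℝ) (t : ℝ) (hd : InDom σ t) (j : ℕ) (hj : j < σ.length) :
    0 ≤ t + phi (σ.drop (j+1)) t :=
  hd.2 _ (List.drop_suffix _ _) (drop_ne' σ j hj)

lemma drop_cons' (σ : List ℝ) (j : ℕ) (hj : j < σ.length) :
    σ.drop j = σ.getD j 0 :: σ.drop (j+1) := by
  rw [List.drop_eq_getElem_cons hj, List.getD_eq_getElem σ 0 hj]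

lemma getD_sign (σ : List ℝ) (hσ : IsSigns σ) (j : ℕ) (hj : j < σ.length) :
    σ.getD j 0 = 1 ∨ σ.getD j 0 = -1 := by
  rw [List.getD_eq_getElem σ 0 hj]
  exact hσ _ (List.getElem_mem hj)

lemma opp_signs_zero (a b A B : ℝ) (ha : a = 1 ∨ a = -1) (hb : b = 1 ∨ b = -1)
    (hab : a ≠ b) (h : a * Real.sqrt A = b * Real.sqrt B) :
    Real.sqrt A = 0 ∧ Real.sqrt B = 0 := by
  have h0 := Real.sqrt_nonneg A
  have h1 := Real.sqrt_nonneg B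
  rcases ha with rfl | rfl <;> rcases hb with rfl | rfl <;>
    first
    | exact absurd rfl hab
    | (constructor <;> nlinarith)


/-- If two distinct root branches `φ_σ` and `φ_ρ` (with `|σ| ≥ |ρ|`) take the
same value at a point `t₀` of both definition domains, then: (a) if `i` is the
least (1-based) index where `σ` and `ρ` differ (here `j = i - 1` is 0-based),
both suffix branches starting at `i` vanish at `t₀`; (b) if `ρ` is an initial
segment of `σ`, then the suffix branch `φ_{(σ_{r+1},…,σ_s)}` vanishes at `t₀`.
Consequently some nonempty suffix root branch vanishes at `t₀`. -/
theorem eq_root_branches_forces_vanishing_suffix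
    (σ ρ : List ℝ) (hσ : IsSigns σ) (hρ : IsSigns ρ)
    (hσne : σ ≠ []) (hρne : ρ ≠ []) (hlen : ρ.length ≤ σ.length) (hne : σ ≠ ρ)
    (t₀ : ℝ) (hdσ : InDom σ t₀) (hdρ : InDom ρ t₀) (heq : phi σ t₀ = phi ρ t₀) :
    ((∀ j < ρ.length, σ.getD j 0 ≠ ρ.getD j 0 →
        (∀ j' < j, σ.getD j' 0 = ρ.getD j' 0) →
        phi (σ.drop j) t₀ = 0 ∧ phi (ρ.drop j) t₀ = 0) ∧
     ((∀ j < ρ.length, σ.getD j 0 = ρ.getD j 0) →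
        phi (σ.drop ρ.length) t₀ = 0)) ∧
    ∃ τ : List ℝ, τ ≠ [] ∧ (τ <:+ σ ∨ τ <:+ ρ) ∧ phi τ t₀ = 0 := by
  classical
  -- key induction: as long as the prefixes agree, the suffix branches agree
  have key : ∀ j, j ≤ ρ.length → (∀ j' < j, σ.getD j' 0 = ρ.getD j' 0) →
      phi (σ.drop j) t₀ = phi (ρ.drop j) t₀ := by
    intro j
    induction j with
    | zero => intro _ _; simpa using heq
    | succ j ih =>
      intro hj hagree
      have hjρ : j < ρ.length := by omega
      have hjσ : j < σ.length := lt_of_lt_of_le hjρ hlen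
      have hprev : phi (σ.drop j) t₀ = phi (ρ.drop j) t₀ :=
        ih (by omega) (fun j' hj' => hagree j' (by omega))
      rw [drop_cons' σ j hjσ, drop_cons' ρ j hjρ] at hprev
      simp only [phi] at hprev
      have hgd : σ.getD j 0 = ρ.getD j 0 := hagree j (by omega)
      have hne0 : σ.getD j 0 ≠ 0 := by
        rcases getD_sign σ hσ j hjσ with h | h <;> rw [h] <;> norm_num
      rw [← hgd] at hprev
      have hsqrt : Real.sqrt (t₀ + phi (σ.drop (j+1)) t₀) =
          Real.sqrt (t₀ + phi (ρ.drop (j+1)) t₀) :=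
        mul_left_cancel₀ hne0 hprev
      have h1 : t₀ + phi (σ.drop (j+1)) t₀ = t₀ + phi (ρ.drop (j+1)) t₀ := by
        exact (Real.sqrt_inj (radicand_nonneg' σ t₀ hdσ j hjσ)
          (radicand_nonneg' ρ t₀ hdρ j hjρ)).mp hsqrt
      linarith
  -- part (a)
  have parta : ∀ j < ρ.length, σ.getD j 0 ≠ ρ.getD j 0 →
      (∀ j' < j, σ.getD j' 0 = ρ.getD j' 0) →
      phi (σ.drop j) t₀ = 0 ∧ phi (ρ.drop j) t₀ = 0 := by
    intro j hjρ hdiff hagree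
    have hjσ : j < σ.length := lt_of_lt_of_le hjρ hlen
    have h := key j (le_of_lt hjρ) hagree
    rw [drop_cons' σ j hjσ, drop_cons' ρ j hjρ] at h ⊢
    simp only [phi] at h ⊢
    obtain ⟨hA, hB⟩ := opp_signs_zero _ _ _ _ (getD_sign σ hσ j hjσ)
      (getD_sign ρ hρ j hjρ) hdiff h
    rw [hA, hB]
    constructor <;> ring
  -- part (b)
  have partb : (∀ j < ρ.length, σ.getD j 0 = ρ.getD j 0) →
      phi (σ.drop ρ.length) t₀ = 0 := by
    intro hagree
    have h := key ρ.length le_rfl (fun j' hj' => hagree j' hj')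
    rw [List.drop_length] at h
    simpa [phi] using h
  refine ⟨⟨parta, partb⟩, ?_⟩
  by_cases hex : ∃ j, j < ρ.length ∧ σ.getD j 0 ≠ ρ.getD j 0
  · -- least differing index
    obtain ⟨hjρ, hdiff⟩ := Nat.find_spec hex
    set j := Nat.find hex with hjdef
    have hmin : ∀ j' < j, σ.getD j' 0 = ρ.getD j' 0 := by
      intro j' hj'
      have := Nat.find_min hex hj'
      push_neg at this
      exact this (by omega)
    have hjσ : j < σ.length := lt_of_lt_of_le hjρ hlen
    refine ⟨σ.drop j, ?_, Or.inl (List.drop_suffix _ _), (parta j hjρ hdiff hmin).1⟩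
    rw [drop_cons' σ j hjσ]
    simp
  · push_neg at hex
    have hagree : ∀ j < ρ.length, σ.getD j 0 = ρ.getD j 0 := fun j hj => hex j hj
    have hlt : ρ.length < σ.length := by
      rcases lt_or_eq_of_le hlen with h | h
      · exact h
      · exfalso
        apply hne
        apply List.ext_getElem h.symm
        intro i h1 h2
        have := hagree i h2
        rwa [List.getD_eq_getElem σ 0 h1, List.getD_eq_getElem ρ 0 h2] at this
    refine ⟨σ.drop ρ.length, ?_, Or.inl (List.drop_suffix _ _), partb hagree⟩
    rw [drop_cons' σ ρ.length hlt]
    simp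
end

section
/- (Signed lexicographical order of root branches.) Let σ = (σ₁,…,σ_s) ∈ {+1,−1}^s and ρ = (ρ₁,…,ρ_r) ∈ {+1,−1}^r with s ≥ r and σ ≠ ρ, and let t ∈ (0,2] be a regular point of both φ_σ and φ_ρ. (a) If σ₁ ≠ ρ₁, then φ_σ(t) > φ_ρ(t) when σ₁ = +1 and φ_σ(t) < φ_ρ(t) when σ₁ = −1. (b) If σ_i = ρ_i for i = 1,…,k, where either k = r (and s > r) or σ_{k+1} ≠ ρ_{k+1}, then φ_σ(t) > φ_ρ(t) when the product σ₁·σ₂·⋯·σ_{k+1} = +1, and φ_σ(t) < φ_ρ(t) when this product is −1. -/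
lemma regular_tail {a : ℝ} {l : List ℝ} {t : ℝ} (h : IsRegularPt (a :: l) t) :
    IsRegularPt l t := by
  obtain ⟨⟨ht, hdom⟩, hreg⟩ := h
  refine ⟨⟨ht, fun ρ hs _ => hdom ρ (hs.trans (List.suffix_cons a l)) ?_⟩,
    fun ρ hs hn => hreg ρ (hs.trans (List.suffix_cons a l)) hn⟩
  intro hρ
  have := hs.length_le
  rw [hρ] at this
  simp at this

lemma phi_sign {σ : List ℝ} {t : ℝ} (hr : IsRegularPt σ t) (hne : σ ≠ []) :
    (σ.getD 0 0 = 1 → 0 < phi σ t) ∧ (σ.getD 0 0 = -1 → phi σ t < 0) := by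
  obtain ⟨a, l, rfl⟩ := List.exists_cons_of_ne_nil hne
  have h0 : phi (a :: l) t ≠ 0 := hr.2 _ (List.suffix_refl _) hne
  have hs : 0 ≤ Real.sqrt (t + phi l t) := Real.sqrt_nonneg _
  constructor <;> intro ha <;>
    simp only [List.getD_cons_zero] at ha <;> subst ha <;>
    simp only [phi, one_mul, neg_one_mul] at h0 ⊢
  · exact lt_of_le_of_ne hs (Ne.symm h0)
  · simp only [ne_eq, neg_eq_zero] at h0
    have : 0 < Real.sqrt (t + phi l t) := lt_of_le_of_ne hs (Ne.symm h0)
    linarith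

lemma prod_signs {l : List ℝ} (hl : IsSigns l) :
    ∀ n, n ≤ l.length → (∏ i ∈ Finset.range n, l.getD i 0) = 1 ∨
      (∏ i ∈ Finset.range n, l.getD i 0) = -1 := by
  intro n
  induction n with
  | zero => intro _; left; simp
  | succ m ih =>
    intro hm
    have hmem : l.getD m 0 = l[m]'(by omega) := List.getD_eq_getElem l 0 (by omega)
    have hv : l[m]'(by omega) = 1 ∨ l[m]'(by omega) = -1 := hl _ (List.getElem_mem _)
    rw [Finset.prod_range_succ]
    rcases ih (by omega) with h | h <;> rw [h, hmem] <;> rcases hv with h2 | h2 <;>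
      rw [h2] <;> norm_num

lemma key (t : ℝ) :
    ∀ k (σ ρ : List ℝ), IsSigns σ → IsSigns ρ → σ ≠ ρ →
      k ≤ ρ.length → ρ.length ≤ σ.length →
      IsRegularPt σ t → IsRegularPt ρ t →
      (∀ i < k, σ.getD i 0 = ρ.getD i 0) →
      (k = ρ.length ∨ σ.getD k 0 ≠ ρ.getD k 0) →
      ((∏ i ∈ Finset.range (k + 1), σ.getD i 0) = 1 → phi ρ t < phi σ t) ∧
      ((∏ i ∈ Finset.range (k + 1), σ.getD i 0) = -1 → phi σ t < phi ρ t) := by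
  intro k
  induction k with
  | zero =>
    intro σ ρ hσ hρ hne hkρ hlen hrσ hrρ hag hcase
    have hσne : σ ≠ [] := by
      rintro rfl
      exact hne (List.length_eq_zero_iff.mp (Nat.le_zero.mp (by simpa using hlen))).symm
    simp only [zero_add, Finset.prod_range_one]
    rcases ρ with _ | ⟨b, ρ'⟩
    · have h0 : phi [] t = 0 := rfl
      rw [h0]
      exact ⟨fun h => (phi_sign hrσ hσne).1 h, fun h => (phi_sign hrσ hσne).2 h⟩
    · have hd : σ.getD 0 0 ≠ (b :: ρ').getD 0 0 := by
        rcases hcase with h | h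
        · simp at h
        · exact h
      obtain ⟨a, σ', rfl⟩ := List.exists_cons_of_ne_nil hσne
      have ha : a = 1 ∨ a = -1 := hσ a (by simp)
      have hb : b = 1 ∨ b = -1 := hρ b (by simp)
      have Sσ := phi_sign hrσ hσne
      have Sρ := phi_sign hrρ (by simp)
      simp only [List.getD_cons_zero] at hd Sσ Sρ ⊢
      rcases ha with rfl | rfl <;> rcases hb with rfl | rfl
      · exact absurd rfl hd
      · exact ⟨fun _ => lt_trans (Sρ.2 rfl) (Sσ.1 rfl), fun h => by norm_num at h⟩
      · exact ⟨fun h => by norm_num at h, fun _ => lt_trans (Sσ.2 rfl) (Sρ.1 rfl)⟩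
      · exact absurd rfl hd
  | succ k ih =>
    intro σ ρ hσ hρ hne hkρ hlen hrσ hrρ hag hcase
    rcases ρ with _ | ⟨b, ρ'⟩
    · simp at hkρ
    rcases σ with _ | ⟨a, σ'⟩
    · simp at hlen
    have hab : a = b := by
      have := hag 0 (Nat.succ_pos k); simpa using this
    subst hab
    have hne' : σ' ≠ ρ' := fun h => hne (by rw [h])
    have hag' : ∀ i < k, σ'.getD i 0 = ρ'.getD i 0 := by
      intro i hi
      have := hag (i + 1) (Nat.succ_lt_succ hi)
      simpa using this
    have hkρ' : k ≤ ρ'.length := by simpa using hkρ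
    have hlen' : ρ'.length ≤ σ'.length := by simpa using hlen
    have hcase' : k = ρ'.length ∨ σ'.getD k 0 ≠ ρ'.getD k 0 := by
      rcases hcase with h | h
      · left; simpa using h
      · right; simpa using h
    have hσ' : IsSigns σ' := fun s hs => hσ s (List.mem_cons_of_mem _ hs)
    have hρ' : IsSigns ρ' := fun s hs => hρ s (List.mem_cons_of_mem _ hs)
    have H := ih σ' ρ' hσ' hρ' hne' hkρ' hlen'
      (regular_tail hrσ) (regular_tail hrρ) hag' hcase'
    have hAσ : 0 ≤ t + phi σ' t :=
      hrσ.1.2 σ' (List.suffix_cons a σ') (by intro h; have := congrArg List.length h; simp at this)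
    have hAρ : 0 ≤ t + phi ρ' t :=
      hrρ.1.2 ρ' (List.suffix_cons a ρ') (by intro h; have := congrArg List.length h; simp at this)
    have ha : a = 1 ∨ a = -1 := hσ a (by simp)
    have hp : (∏ i ∈ Finset.range (k + 1 + 1), (a :: σ').getD i 0)
        = (∏ i ∈ Finset.range (k + 1), σ'.getD i 0) * a := by
      rw [Finset.prod_range_succ']
      simp
    have hk1 : k + 1 ≤ σ'.length := by
      rcases hcase' with h | h
      · -- k = ρ'.length; if σ'.length = k then σ' = ρ', contradiction
        by_contra hcon
        have hsl : σ'.length = k := by omega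
        apply hne'
        apply List.ext_getElem (by omega)
        intro i h1 h2
        have := hag' i (by omega)
        rwa [List.getD_eq_getElem σ' 0 h1, List.getD_eq_getElem ρ' 0 h2] at this
      · by_contra hcon
        have h1 : σ'.length ≤ k := by omega
        have h2 : ρ'.length ≤ k := le_trans hlen' h1
        rw [List.getD_eq_default _ _ h1, List.getD_eq_default _ _ h2] at h
        exact h rfl
    have hp'val := prod_signs hσ' (k + 1) hk1
    have hphiσ : phi (a :: σ') t = a * Real.sqrt (t + phi σ' t) := rfl
    have hphiρ : phi (a :: ρ') t = a * Real.sqrt (t + phi ρ' t) := rfl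
    constructor <;> intro hval <;> rw [hp] at hval <;>
      rcases ha with rfl | rfl <;> rcases hp'val with hpv | hpv <;>
      rw [hpv] at hval <;> try norm_num at hval
    · -- a = 1, p' = 1, goal phi ρ < phi σ
      have h1 := H.1 hpv
      rw [hphiσ, hphiρ, one_mul, one_mul]
      exact Real.sqrt_lt_sqrt hAρ (by linarith)
    · -- a = -1, p' = -1, goal phi ρ < phi σ
      have h1 := H.2 hpv
      rw [hphiσ, hphiρ, neg_one_mul, neg_one_mul, neg_lt_neg_iff]
      exact Real.sqrt_lt_sqrt hAσ (by linarith)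
    · -- a = 1, p' = -1, goal phi σ < phi ρ
      have h1 := H.2 hpv
      rw [hphiσ, hphiρ, one_mul, one_mul]
      exact Real.sqrt_lt_sqrt hAσ (by linarith)
    · -- a = -1, p' = 1, goal phi σ < phi ρ
      have h1 := H.1 hpv
      rw [hphiσ, hphiρ, neg_one_mul, neg_one_mul, neg_lt_neg_iff]
      exact Real.sqrt_lt_sqrt hAρ (by linarith)

/-- Signed lexicographical order of root branches: if `σ ≠ ρ` (with
`|σ| ≥ |ρ|`) and `t ∈ (0,2]` is a regular point of both `φ_σ` and `φ_ρ`, then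
(a) if the first signs differ, `φ_σ(t) > φ_ρ(t)` when `σ₁ = +1` and
`φ_σ(t) < φ_ρ(t)` when `σ₁ = -1`; (b) if the first `k` signs agree and either
`k = |ρ|` or the `(k+1)`-th signs differ, then `φ_σ(t) > φ_ρ(t)` when
`σ₁·σ₂⋯σ_{k+1} = +1` and `φ_σ(t) < φ_ρ(t)` when `σ₁·σ₂⋯σ_{k+1} = -1`.
(Lists are 0-indexed: `σ.getD i 0` is `σ_{i+1}`.) -/
theorem signed_lex_order_of_root_branches
    (σ ρ : List ℝ) (hσ : IsSigns σ) (hρ : IsSigns ρ)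
    (hσne : σ ≠ []) (hρne : ρ ≠ []) (hlen : ρ.length ≤ σ.length) (hne : σ ≠ ρ)
    (t : ℝ) (ht : t ∈ Set.Ioc (0 : ℝ) 2)
    (hrσ : IsRegularPt σ t) (hrρ : IsRegularPt ρ t) :
    -- (a) first signs differ
    ((σ.getD 0 0 ≠ ρ.getD 0 0 →
        (σ.getD 0 0 = 1 → phi ρ t < phi σ t) ∧
        (σ.getD 0 0 = -1 → phi σ t < phi ρ t)) ∧
    -- (b) first k signs agree; k = |ρ| or the (k+1)-th signs differ
     (∀ k, k ≤ ρ.length → (∀ i < k, σ.getD i 0 = ρ.getD i 0) →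
        (k = ρ.length ∨ σ.getD k 0 ≠ ρ.getD k 0) →
        ((∏ i ∈ Finset.range (k + 1), σ.getD i 0) = 1 → phi ρ t < phi σ t) ∧
        ((∏ i ∈ Finset.range (k + 1), σ.getD i 0) = -1 → phi σ t < phi ρ t))) := by
  obtain ⟨ht0, ht2⟩ := ht
  constructor
  · -- part (a)
    intro hd
    obtain ⟨a, σ', rfl⟩ := List.exists_cons_of_ne_nil hσne
    obtain ⟨b, ρ', rfl⟩ := List.exists_cons_of_ne_nil hρne
    have ha : a = 1 ∨ a = -1 := hσ a (by simp)
    have hb : b = 1 ∨ b = -1 := hρ b (by simp)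
    have Sσ := phi_sign hrσ hσne
    have Sρ := phi_sign hrρ hρne
    simp only [List.getD_cons_zero] at hd Sσ Sρ ⊢
    rcases ha with rfl | rfl <;> rcases hb with rfl | rfl
    · exact absurd rfl hd
    · exact ⟨fun _ => lt_trans (Sρ.2 rfl) (Sσ.1 rfl), fun h => by norm_num at h⟩
    · exact ⟨fun h => by norm_num at h, fun _ => lt_trans (Sσ.2 rfl) (Sρ.1 rfl)⟩
    · exact absurd rfl hd
  · -- part (b)
    intro k hk hag hcase
    exact key t k σ ρ hσ hρ hne hk hlen hrσ hrρ hag hcase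
end

section
/- Let t₀ ∈ (0,2] and p ≥ 2, and suppose the critical point 0 is a superstable cycle of q_{t₀} of prime period p, i.e. q_{t₀}^p(0) = 0 and q_{t₀}^k(0) ≠ 0 for 1 ≤ k ≤ p−1. Let σ_k ∈ {+1,−1} be the sign of q_{t₀}^k(0) for 1 ≤ k ≤ p−1 (so σ₁ = +1). Then t₀ lies in the definition domain of the root branch φ_{(+1,−σ₂,…,−σ_{p−1})} of length p−1, it satisfies the fixed-point equation t₀ = φ_{(+1,−σ₂,…,−σ_{p−1})}(t₀), and t₀ is a regular point of this root branch. -/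
/-- If `0` is a superstable cycle of `q_{t₀}` of prime period `p ≥ 2`
(`q_{t₀}^p(0) = 0`, `q_{t₀}^k(0) ≠ 0` for `1 ≤ k ≤ p-1`), and `σ_k` denotes the
sign of `q_{t₀}^k(0)`, then `t₀` lies in the definition domain of the root
branch with signature `(+1, -σ₂, …, -σ_{p-1})` of length `p - 1`, satisfies the
fixed-point equation `t₀ = φ_{(+1,-σ₂,…,-σ_{p-1})}(t₀)`, and is a regular point
of this root branch. -/
theorem superstable_cycle_gives_root_branch_fixed_point
    (t₀ : ℝ) (ht : t₀ ∈ Set.Ioc (0 : ℝ) 2) (p : ℕ) (hp : 2 ≤ p)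
    (hper : (q t₀)^[p] 0 = 0)
    (hprime : ∀ k, 1 ≤ k → k ≤ p - 1 → (q t₀)^[k] 0 ≠ 0)
    (L : List ℝ)
    (hL : L = List.ofFn (fun j : Fin (p - 1) =>
      if (j : ℕ) = 0 then (1 : ℝ) else -Real.sign ((q t₀)^[(j : ℕ) + 1] 0))) :
    InDom L t₀ ∧ t₀ = phi L t₀ ∧ IsRegularPt L t₀ := by
  obtain ⟨ht0, ht2⟩ := ht
  have hsma : ∀ x : ℝ, Real.sign x * |x| = x := by
    intro x
    rcases lt_trichotomy x 0 with h|h|h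
    · rw [Real.sign_of_neg h, abs_of_neg h]; ring
    · simp [h]
    · rw [Real.sign_of_pos h, abs_of_pos h]; ring
  have hlen : L.length = p - 1 := by rw [hL]; simp
  have hstep : ∀ k, (q t₀)^[k+1] 0 = t₀ - ((q t₀)^[k] 0)^2 := by
    intro k; rw [Function.iterate_succ_apply']; rfl
  -- the k-th entry of L for k ≥ 1
  have hget : ∀ k (hk : k < p - 1), 1 ≤ k →
      L.drop k = (-Real.sign ((q t₀)^[k+1] 0)) :: L.drop (k+1) := by
    intro k hk h1
    have hk' : k < L.length := by omega
    rw [List.drop_eq_getElem_cons hk']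
    congr 1
    subst hL
    rw [List.getElem_ofFn]
    rw [if_neg (show ¬((⟨k, by simpa using hk'⟩ : Fin (p-1)) : ℕ) = 0 by simp; omega)]
  -- key computation for suffixes with index k ≥ 1
  have key : ∀ m k, k + m = p - 1 → 1 ≤ k →
      phi (L.drop k) t₀ = -((q t₀)^[k+1] 0) := by
    intro m
    induction m with
    | zero =>
      intro k hk _
      have : k = p - 1 := by omega
      subst this
      have hd : L.drop (p - 1) = [] := by rw [← hlen]; exact List.drop_length
      have hpp : p - 1 + 1 = p := by omega
      rw [hd, hpp, hper]
      simp [phi]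
    | succ m ih =>
      intro k hk h1
      have hklt : k < p - 1 := by omega
      rw [hget k hklt h1]
      have ih' := ih (k+1) (by omega) (by omega)
      show -Real.sign ((q t₀)^[k+1] 0) * Real.sqrt (t₀ + phi (L.drop (k+1)) t₀)
          = -((q t₀)^[k+1] 0)
      rw [ih']
      have hrad : t₀ + -((q t₀)^[k+1+1] 0) = ((q t₀)^[k+1] 0)^2 := by
        rw [hstep (k+1)]; ring
      rw [hrad, Real.sqrt_sq_eq_abs]
      rw [neg_mul, hsma]
  -- phi at a full drop for 1 ≤ k ≤ p-1 (uniform form)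
  have hdrop1 : phi (L.drop 1) t₀ = -((q t₀)^[2] 0) := key (p - 2) 1 (by omega) le_rfl
  -- the head of L
  have hL0 : L.drop 0 = (1 : ℝ) :: L.drop 1 := by
    have h0 : 0 < L.length := by omega
    rw [List.drop_eq_getElem_cons h0]
    congr 1
    subst hL
    rw [List.getElem_ofFn]
    simp
  have hx1 : (q t₀)^[1] 0 = t₀ := by simp [q]
  have hphiL : phi L t₀ = t₀ := by
    have : phi L t₀ = phi (L.drop 0) t₀ := by rw [List.drop_zero]
    rw [this, hL0]
    show 1 * Real.sqrt (t₀ + phi (L.drop 1) t₀) = t₀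
    rw [hdrop1, one_mul]
    have hrad : t₀ + -((q t₀)^[2] 0) = ((q t₀)^[1] 0)^2 := by
      rw [hstep 1]; ring
    rw [hrad, hx1, Real.sqrt_sq_eq_abs, abs_of_pos ht0]
  -- every suffix is a drop
  have hsuf : ∀ ρ : List ℝ, ρ <:+ L → ρ = L.drop (L.length - ρ.length) ∧ ρ.length ≤ L.length := by
    intro ρ hρ
    exact ⟨List.suffix_iff_eq_drop.mp hρ, hρ.length_le⟩
  have hInDom : InDom L t₀ := by
    refine ⟨le_of_lt ht0, ?_⟩
    intro ρ hρ hne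
    obtain ⟨hρd, hρl⟩ := hsuf ρ hρ
    set k := L.length - ρ.length with hkdef
    have hk1 : 1 ≤ k := by
      rcases Nat.eq_zero_or_pos k with h0 | h
      · exfalso; apply hne; rw [hρd, h0, List.drop_zero]
      · exact h
    have hkle : k ≤ p - 1 := by omega
    rw [hρd]
    rw [key (p - 1 - k) k (by omega) hk1]
    have : t₀ + -((q t₀)^[k+1] 0) = ((q t₀)^[k] 0)^2 := by rw [hstep k]; ring
    rw [this]
    positivity
  refine ⟨hInDom, hphiL.symm, hInDom, ?_⟩
  intro ρ hρ hne
  obtain ⟨hρd, hρl⟩ := hsuf ρ hρ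
  set k := L.length - ρ.length with hkdef
  have hρpos : 0 < ρ.length := List.length_pos_iff.mpr hne
  have hkle : k ≤ p - 2 := by omega
  rcases Nat.eq_zero_or_pos k with h0 | hk1
  · rw [hρd, h0, List.drop_zero, hphiL]
    exact ne_of_gt ht0
  · rw [hρd, key (p - 1 - k) k (by omega) hk1]
    have := hprime (k+1) (by omega) (by omega)
    simpa using this
end

section
/- Let p ≥ 2, let σ = (σ₁,…,σ_{p−1}) ∈ {+1,−1}^{p−1} with σ₁ = +1, and suppose t₀ ∈ (0,2] is a regular point of the root branch φ_σ satisfying t₀ = φ_σ(t₀). Then the critical point 0 is a superstable cycle of q_{t₀} of prime period p: q_{t₀}^p(0) = 0, and for 1 ≤ k ≤ p−1 one has q_{t₀}^k(0) ≠ 0; more precisely q_{t₀}(0) = t₀ = φ_σ(t₀) and q_{t₀}^k(0) = φ_{(−σ_k, σ_{k+1},…,σ_{p−1})}(t₀) for 2 ≤ k ≤ p−1, so the sign of q_{t₀}^k(0) is −σ_k for 2 ≤ k ≤ p−1. -/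

lemma phi_sq_eq (s : ℝ) (ρ : List ℝ) (t : ℝ) (hs : s = 1 ∨ s = -1)
    (hr : 0 ≤ t + phi ρ t) : (phi (s :: ρ) t) ^ 2 = t + phi ρ t := by
  simp only [phi, mul_pow, Real.sq_sqrt hr]
  rcases hs with h | h <;> simp [h]

/-- Conversely, if `t₀ ∈ (0,2]` is a regular point of a root branch `φ_σ` with
`σ = (σ₁,…,σ_{p-1})`, `σ₁ = +1`, satisfying the fixed-point equation
`t₀ = φ_σ(t₀)`, then `0` is a superstable cycle of `q_{t₀}` of prime period
`p`: `q_{t₀}^p(0) = 0`, `q_{t₀}^k(0) ≠ 0` for `1 ≤ k ≤ p-1`; more precisely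
`q_{t₀}(0) = t₀ = φ_σ(t₀)` and, for `2 ≤ k ≤ p-1`,
`q_{t₀}^k(0) = φ_{(-σ_k, σ_{k+1},…,σ_{p-1})}(t₀)`, whose sign is `-σ_k`. -/
theorem root_branch_fixed_point_gives_superstable_cycle
    (p : ℕ) (hp : 2 ≤ p) (σ : List ℝ) (hσ : IsSigns σ)
    (hlen : σ.length = p - 1) (hhead : σ.getD 0 0 = 1)
    (t₀ : ℝ) (ht : t₀ ∈ Set.Ioc (0 : ℝ) 2)
    (hreg : IsRegularPt σ t₀) (hfix : t₀ = phi σ t₀) :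
    (q t₀)^[p] 0 = 0 ∧
    (∀ k, 1 ≤ k → k ≤ p - 1 → (q t₀)^[k] 0 ≠ 0) ∧
    (q t₀)^[1] 0 = t₀ ∧
    (∀ k, 2 ≤ k → k ≤ p - 1 →
      (q t₀)^[k] 0 = phi ((-(σ.getD (k - 1) 0)) :: σ.drop k) t₀ ∧
      Real.sign ((q t₀)^[k] 0) = -(σ.getD (k - 1) 0)) := by

  obtain ⟨⟨_, hdom⟩, hregn⟩ := hreg
  obtain ⟨ht0, _⟩ := ht
  have hlenpos : 0 < σ.length := by omega
  have hne : ∀ j, 1 ≤ j → σ.drop j ≠ σ := by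
    intro j hj h
    have := congrArg List.length h
    simp [List.length_drop] at this
    omega
  have hrad : ∀ j, 1 ≤ j → 0 ≤ t₀ + phi (σ.drop j) t₀ :=
    fun j hj => hdom _ (List.drop_suffix j σ) (hne j hj)
  have hsq : ∀ k, 1 ≤ k → k ≤ σ.length →
      ((q t₀)^[k] 0) ^ 2 = t₀ + phi (σ.drop k) t₀ := by
    intro k
    induction k with
    | zero => omega
    | succ k ih =>
      intro _ hk1
      rcases Nat.eq_zero_or_pos k with hk0 | hkpos
      · subst hk0
        have hcons : σ = σ[0] :: σ.drop 1 := by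
          have h := List.drop_eq_getElem_cons (l := σ) (i := 0) hlenpos
          rw [List.drop_zero] at h
          exact h
        have h1 : t₀ ^ 2 = t₀ + phi (σ.drop 1) t₀ := by
          conv_lhs => rw [hfix, hcons]
          exact phi_sq_eq _ _ _ (hσ _ (List.getElem_mem hlenpos))
            (hrad 1 le_rfl)
        simpa [q] using h1
      · have hklen : k < σ.length := by omega
        have hcons : σ.drop k = σ[k] :: σ.drop (k + 1) :=
          List.drop_eq_getElem_cons hklen
        have hval : (q t₀)^[k + 1] 0 = -phi (σ.drop k) t₀ := by
          rw [Function.iterate_succ_apply']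
          simp only [q, ih hkpos (by omega)]
          ring
        rw [hval, neg_pow, hcons]
        rw [phi_sq_eq _ _ _ (hσ _ (List.getElem_mem hklen)) (hrad (k + 1) (by omega))]
        ring
  have hval : ∀ k, 1 ≤ k → k ≤ σ.length →
      (q t₀)^[k + 1] 0 = -phi (σ.drop k) t₀ := by
    intro k hk1 hk2
    rw [Function.iterate_succ_apply']
    simp only [q, hsq k hk1 hk2]
    ring
  have hq1 : (q t₀)^[1] 0 = t₀ := by simp [q]
  have hplen : p = σ.length + 1 := by omega
  have hvk : ∀ k, 2 ≤ k → k ≤ p - 1 →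
      (q t₀)^[k] 0 = phi ((-(σ.getD (k - 1) 0)) :: σ.drop k) t₀ := by
    intro k hk2 hkp
    have hklen : k - 1 < σ.length := by omega
    have hcons : σ.drop (k - 1) = σ[k - 1] :: σ.drop k := by
      have := List.drop_eq_getElem_cons hklen
      simpa [Nat.sub_add_cancel (by omega : 1 ≤ k)] using this
    have h1 : (q t₀)^[k] 0 = -phi (σ.drop (k - 1)) t₀ := by
      have := hval (k - 1) (by omega) (by omega)
      simpa [Nat.sub_add_cancel (by omega : 1 ≤ k)] using this
    rw [h1, hcons, List.getD_eq_getElem σ 0 hklen]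
    simp only [phi]
    ring
  refine ⟨?_, ?_, hq1, ?_⟩
  · rw [hplen, hval σ.length (by omega) le_rfl]
    simp [phi]
  · intro k hk1 hkp
    rcases Nat.eq_or_lt_of_le hk1 with h1 | h2
    · rw [← h1, hq1]; exact ne_of_gt ht0
    · have h := hvk k h2 hkp
      have hklen : k - 1 < σ.length := by omega
      have hcons : σ.drop (k - 1) = σ[k - 1] :: σ.drop k := by
        have := List.drop_eq_getElem_cons hklen
        simpa [Nat.sub_add_cancel (by omega : 1 ≤ k)] using this
      have h1 : (q t₀)^[k] 0 = -phi (σ.drop (k - 1)) t₀ := by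
        have := hval (k - 1) (by omega) (by omega)
        simpa [Nat.sub_add_cancel (by omega : 1 ≤ k)] using this
      rw [h1, neg_ne_zero]
      refine hregn _ (List.drop_suffix _ σ) ?_
      simp [List.drop_eq_nil_iff]
      omega
  · intro k hk2 hkp
    have h := hvk k hk2 hkp
    refine ⟨h, ?_⟩
    have hklen : k - 1 < σ.length := by omega
    have hcons : σ.drop (k - 1) = σ[k - 1] :: σ.drop k := by
      have := List.drop_eq_getElem_cons hklen
      simpa [Nat.sub_add_cancel (by omega : 1 ≤ k)] using this
    have hnz : phi (σ.drop (k - 1)) t₀ ≠ 0 := by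
      refine hregn _ (List.drop_suffix _ σ) ?_
      simp [List.drop_eq_nil_iff]
      omega
    have hsnz : Real.sqrt (t₀ + phi (σ.drop k) t₀) ≠ 0 := by
      intro hz
      apply hnz
      rw [hcons]
      simp [phi, hz]
    have hspos : 0 < Real.sqrt (t₀ + phi (σ.drop k) t₀) :=
      lt_of_le_of_ne (Real.sqrt_nonneg _) (Ne.symm hsnz)
    rw [h, List.getD_eq_getElem σ 0 hklen]
    simp only [phi]
    rcases hσ _ (List.getElem_mem hklen) with hs | hs
    · rw [hs, Real.sign_of_neg (by nlinarith)]
    · rw [hs, Real.sign_of_pos (by nlinarith)]; norm_num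
end

section
/- The quadratic family has superstable cycles of arbitrary length: there exists a strictly increasing sequence (t_n)_{n≥1} of parameters with 1 ≤ t_n < 2 and t_n → 2 as n → ∞ such that, for every n ≥ 1, the critical point 0 is periodic under q_{t_n} with prime period n+1, i.e. q_{t_n}^{n+1}(0) = 0 and q_{t_n}^{k}(0) ≠ 0 for all 1 ≤ k ≤ n. -/
namespace Superstable

noncomputable def P : ℕ → ℝ → ℝ
  | 0, _ => 0
  | n+1, t => t - (P n t) ^ 2

lemma P_succ (n : ℕ) (t : ℝ) : P (n+1) t = t - (P n t) ^ 2 := rfl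

lemma P_eq_iterate (n : ℕ) (t : ℝ) : P n t = (q t)^[n] 0 := by
  induction n with
  | zero => simp [P]
  | succ n ih => rw [Function.iterate_succ_apply', ← ih]; rfl

lemma P_continuous (n : ℕ) : Continuous (P n) := by
  induction n with
  | zero => exact continuous_const
  | succ n ih =>
    have : Continuous fun t : ℝ => t - (P n t) ^ 2 := continuous_id.sub (ih.pow 2)
    exact this

lemma P_one (n : ℕ) : 0 ≤ P n 1 ∧ P n 1 ≤ 1 := by
  induction n with
  | zero => norm_num [P]
  | succ n ih =>
    obtain ⟨h0, h1⟩ := ih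
    rw [P_succ]
    constructor <;> nlinarith

lemma P_two (n : ℕ) (hn : 2 ≤ n) : P n 2 = -2 := by
  induction n, hn using Nat.le_induction with
  | base => norm_num [P]
  | succ n hn ih => rw [P_succ, ih]; norm_num

def S (n : ℕ) : Set ℝ := Set.Icc 1 2 ∩ {t | 0 ≤ P (n+1) t}

noncomputable def T (n : ℕ) : ℝ := sSup (S n)

lemma S_compact (n : ℕ) : IsCompact (S n) :=
  isCompact_Icc.inter_right (isClosed_le continuous_const (P_continuous (n+1)))

lemma S_nonempty (n : ℕ) : (S n).Nonempty := ⟨1, ⟨by norm_num, (P_one (n+1)).1⟩⟩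

lemma T_mem (n : ℕ) : T n ∈ S n := (S_compact n).sSup_mem (S_nonempty n)

lemma le_T {n : ℕ} {t : ℝ} (h : t ∈ S n) : t ≤ T n := le_csSup (S_compact n).bddAbove h

lemma T_ge_one (n : ℕ) : 1 ≤ T n := (T_mem n).1.1
lemma T_le_two (n : ℕ) : T n ≤ 2 := (T_mem n).1.2
lemma P_T_nonneg (n : ℕ) : 0 ≤ P (n+1) (T n) := (T_mem n).2

lemma T_lt_two (n : ℕ) (hn : 1 ≤ n) : T n < 2 := by
  rcases lt_or_eq_of_le (T_le_two n) with h | h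
  · exact h
  · exfalso
    have h0 := P_T_nonneg n
    rw [h, P_two (n+1) (by omega)] at h0
    linarith

lemma P_neg_of_gt (n : ℕ) {t : ℝ} (h1 : T n < t) (h2 : t ≤ 2) : P (n+1) t < 0 := by
  by_contra h
  push_neg at h
  have : t ∈ S n := ⟨⟨le_trans (T_ge_one n) h1.le, h2⟩, h⟩
  exact absurd (le_T this) (not_le.mpr h1)

lemma P_T_zero (n : ℕ) (hn : 1 ≤ n) : P (n+1) (T n) = 0 := by
  rcases eq_or_lt_of_le (P_T_nonneg n) with h | h
  · exact h.symm
  · exfalso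
    have hc : ContinuousAt (P (n+1)) (T n) := (P_continuous (n+1)).continuousAt
    rw [Metric.continuousAt_iff] at hc
    obtain ⟨δ, hδ, hb⟩ := hc _ h
    set t' := min 2 (T n + δ/2) with ht'
    have h1 : T n < t' := lt_min (T_lt_two n hn) (by linarith)
    have h2 : t' ≤ 2 := min_le_left _ _
    have h3 : dist t' (T n) < δ := by
      rw [Real.dist_eq, abs_lt]
      have : t' ≤ T n + δ/2 := min_le_right _ _
      constructor <;> linarith
    have h4 := hb h3
    rw [Real.dist_eq, abs_lt] at h4
    have hP : 0 < P (n+1) t' := by linarith [h4.1]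
    linarith [P_neg_of_gt n h1 h2]

lemma T_succ_aux (n : ℕ) (hn : 1 ≤ n) : P (n+2) (T n) = T n := by
  rw [P_succ, P_T_zero n hn]; ring

lemma T_lt_succ (n : ℕ) (hn : 1 ≤ n) : T n < T (n+1) := by
  have hmem : T n ∈ S (n+1) :=
    ⟨⟨T_ge_one n, T_le_two n⟩, by rw [Set.mem_setOf_eq, T_succ_aux n hn]; linarith [T_ge_one n]⟩
  rcases lt_or_eq_of_le (le_T hmem) with h | h
  · exact h
  · exfalso
    have h0 := P_T_zero (n+1) (by omega)
    rw [← h, T_succ_aux n hn] at h0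
    linarith [T_ge_one n]

lemma T_lt_of_lt {m n : ℕ} (h1 : 1 ≤ m) (h2 : m < n) : T m < T n := by
  induction n with
  | zero => omega
  | succ n ih =>
    rcases Nat.lt_succ_iff_lt_or_eq.mp h2 with h | h
    · exact lt_trans (ih h) (T_lt_succ n (by omega))
    · subst h; exact T_lt_succ m h1

lemma P_T_neg {n k : ℕ} (hn : 1 ≤ n) (hk2 : 2 ≤ k) (hkn : k ≤ n) : P k (T n) < 0 := by
  obtain ⟨j, rfl⟩ : ∃ j, k = j + 1 := ⟨k - 1, by omega⟩
  have hj : 1 ≤ j := by omega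
  have hlt : T j < T n := T_lt_of_lt hj (by omega)
  exact P_neg_of_gt j hlt (T_le_two n)


set_option maxHeartbeats 1000000 in
lemma two_sub_T_le (n : ℕ) (hn : 2 ≤ n) : 2 - T n ≤ 24 / 2 ^ n := by
  have hn1 : 1 ≤ n := by omega
  set t := T n with htdef
  have ht1 : 1 ≤ t := T_ge_one n
  have ht2 : t ≤ 2 := T_le_two n
  set s := Real.sqrt (1 + 4 * t) with hs
  have hs0 : 0 ≤ s := Real.sqrt_nonneg _
  have hssq : s ^ 2 = 1 + 4 * t := Real.sq_sqrt (by linarith)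
  have hs2 : 2 ≤ s := by nlinarith
  have hs3 : s ≤ 3 := by nlinarith
  set a := (-1 - s) / 2 with ha
  have hafix : t - a ^ 2 = a := by rw [ha]; field_simp; nlinarith
  have ha1 : a ≤ -1 := by rw [ha]; linarith
  have ha2 : -2 ≤ a := by rw [ha]; linarith
  have hPn1 : P (n+1) t = 0 := P_T_zero n hn1
  have hxneg : ∀ k, 2 ≤ k → k ≤ n → P k t < 0 := fun k h2 hk => P_T_neg hn1 h2 hk
  -- all the intermediate points are ≤ -1
  have hxle : ∀ k, 2 ≤ k → k ≤ n → P k t ≤ -1 := by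
    intro k h2 hk
    have hneg := hxneg k h2 hk
    have hnext : P (k+1) t ≤ 0 := by
      rcases eq_or_lt_of_le hk with h | h
      · rw [h, hPn1]
      · exact (hxneg (k+1) (by omega) (by omega)).le
    rw [P_succ] at hnext
    nlinarith
  -- expansion chain
  have chain : ∀ k, 2 ≤ k → k ≤ n → 2 ^ k * (P 2 t - a) ≤ 4 * |P k t - a| := by
    intro k h2
    induction k, h2 using Nat.le_induction with
    | base =>
      intro _
      have : P 2 t - a ≤ |P 2 t - a| := le_abs_self _
      nlinarith
    | succ k hk ih =>
      intro hk1n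
      have hkn : k ≤ n := by omega
      have ihh := ih (by omega)
      have hxk : P k t ≤ -1 := hxle k hk hkn
      have heq1 : P (k+1) t - a = (a - P k t) * (a + P k t) := by
        rw [P_succ]; linear_combination hafix
      have heq : |P (k+1) t - a| = |P k t - a| * (-(a + P k t)) := by
        rw [heq1, abs_mul, abs_sub_comm, abs_of_neg (by linarith : a + P k t < 0)]
      have hfac : 2 ≤ -(a + P k t) := by linarith
      have h1 : 2 * |P k t - a| ≤ |P k t - a| * (-(a + P k t)) := by
        nlinarith [abs_nonneg (P k t - a)]
      calc 2 ^ (k+1) * (P 2 t - a) = 2 * (2 ^ k * (P 2 t - a)) := by ring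
        _ ≤ 2 * (4 * |P k t - a|) := by linarith
        _ = 4 * (2 * |P k t - a|) := by ring
        _ ≤ 4 * (|P k t - a| * (-(a + P k t))) := by linarith
        _ = 4 * |P (k+1) t - a| := by rw [heq]
  have hchain := chain n hn le_rfl
  -- |P n t - a| ≤ 1
  have hxn1 : P n t ≤ -1 := hxle n hn le_rfl
  have hxnsq : (P n t) ^ 2 = t := by
    have := hPn1
    rw [P_succ] at this
    linarith
  have hxn2 : -2 ≤ P n t := by nlinarith
  have habs : |P n t - a| ≤ 1 := by
    rw [abs_le]; constructor <;> linarith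
  have hfin : 2 ^ n * (P 2 t - a) ≤ 4 := by
    calc 2 ^ n * (P 2 t - a) ≤ 4 * |P n t - a| := hchain
      _ ≤ 4 := by linarith
  -- lower bound on P 2 t - a
  have hx2 : P 2 t = t - t ^ 2 := by norm_num [P]
  set b := (-1 + s) / 2 with hb
  have hb1 : 1/2 ≤ b := by rw [hb]; linarith
  have hb2 : b ≤ 1 := by rw [hb]; linarith
  have hprod : (P 2 t - a) * (b - P 2 t) = t ^ 3 * (2 - t) := by
    rw [hx2, ha, hb]; linear_combination (1/4 : ℝ) * hssq
  have hd1 : 1/2 ≤ b - P 2 t := by rw [hx2]; nlinarith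
  have hd2 : b - P 2 t ≤ 3 := by rw [hx2]; nlinarith
  have hd3 : 0 ≤ P 2 t - a := by
    by_contra hA
    push_neg at hA
    have h5 : (P 2 t - a) * (b - P 2 t) < 0 := mul_neg_of_neg_of_pos hA (by linarith)
    have h6 : (0:ℝ) ≤ t ^ 3 * (2 - t) :=
      mul_nonneg (by positivity) (by linarith)
    rw [hprod] at h5
    linarith
  have hcube : (0:ℝ) ≤ t ^ 3 - 1 := by nlinarith [sq_nonneg t, sq_nonneg (t-1)]
  have hx2a : 2 - t ≤ 3 * (P 2 t - a) := by
    nlinarith [hprod, mul_nonneg hd3 (by linarith : (0:ℝ) ≤ 3 - (b - P 2 t)),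
      mul_nonneg (by linarith : (0:ℝ) ≤ 2 - t) hcube]
  have hp : (0:ℝ) < 2 ^ n := by positivity
  rw [le_div_iff₀ hp]
  nlinarith [mul_le_mul_of_nonneg_left hx2a hp.le]

lemma T_tendsto : Filter.Tendsto T Filter.atTop (nhds 2) := by
  have h1 : Filter.Tendsto (fun n : ℕ => (2:ℝ) - 24 * (1/2) ^ n) Filter.atTop (nhds 2) := by
    have h0 := tendsto_pow_atTop_nhds_zero_of_lt_one (by norm_num : (0:ℝ) ≤ 1/2) (by norm_num)
    have h2 := (tendsto_const_nhds (x := (2:ℝ)) (f := Filter.atTop)).sub (h0.const_mul (24:ℝ))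
    simpa using h2
  refine tendsto_of_tendsto_of_tendsto_of_le_of_le' h1 tendsto_const_nhds ?_ ?_
  · filter_upwards [Filter.eventually_ge_atTop 2] with n hn
    have h3 := two_sub_T_le n hn
    have h4 : (24:ℝ) / 2 ^ n = 24 * (1/2) ^ n := by
      rw [div_eq_mul_inv, one_div, inv_pow]
    linarith [h4 ▸ h3]
  · filter_upwards with n using T_le_two n

end Superstable

/-- The quadratic family has superstable cycles of arbitrary length: there is a
sequence `(t_n)_{n ≥ 1}`, strictly increasing, with `1 ≤ t_n < 2` and
`t_n → 2`, such that for each `n ≥ 1` the critical point `0` is periodic under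
`q_{t_n}` with prime period `n + 1`. -/
theorem superstable_cycles_of_arbitrary_length :
    ∃ t : ℕ → ℝ,
      (∀ n, 1 ≤ n → t n < t (n + 1)) ∧
      (∀ n, 1 ≤ n → 1 ≤ t n ∧ t n < 2) ∧
      Filter.Tendsto t Filter.atTop (nhds 2) ∧
      ∀ n, 1 ≤ n →
        (q (t n))^[n + 1] 0 = 0 ∧ ∀ k, 1 ≤ k → k ≤ n → (q (t n))^[k] 0 ≠ 0 := by
  refine ⟨Superstable.T, fun n hn => Superstable.T_lt_succ n hn,
    fun n hn => ⟨Superstable.T_ge_one n, Superstable.T_lt_two n hn⟩,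
    Superstable.T_tendsto, fun n hn => ⟨?_, ?_⟩⟩
  · rw [← Superstable.P_eq_iterate]; exact Superstable.P_T_zero n hn
  · intro k hk1 hkn
    rw [← Superstable.P_eq_iterate]
    rcases eq_or_lt_of_le hk1 with h | h
    · rw [← h]
      have : Superstable.P 1 (Superstable.T n) = Superstable.T n := by
        norm_num [Superstable.P]
      rw [this]
      have := Superstable.T_ge_one n
      intro hc; rw [hc] at this; linarith
    · exact ne_of_lt (Superstable.P_T_neg hn h hkn)
end

section
/- For every n ≥ 1, the polynomial q_2^n (the n-th iterate of q_2(x) = 2 − x²) has exactly 2^n real roots, all simple and all lying in the open interval (−2,2); explicitly, the map σ ↦ x̄_σ := φ_σ(2) = σ₁√(2 + σ₂√(2 + ⋯ + σ_n√2)) from {+1,−1}^ن to ℝ is injective, each x̄_σ satisfies q_2^n(x̄_σ) = 0 with derivative of q_2^n nonzero at x̄_σ, −2 < x̄_σ < 2, and every real x with q_2^n(x) = 0 equals x̄_σ for some σ ∈ {+1,−1}^n. -/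
def flipHead : List ℝ → List ℝ
  | [] => []
  | a :: b => (-a) :: b

lemma isSigns_flip {σ : List ℝ} (h : IsSigns σ) : IsSigns (flipHead σ) := by
  cases σ with
  | nil => exact h
  | cons a b =>
    intro s hs
    rcases List.mem_cons.mp hs with hs | hs
    · rcases h a (by simp) with h1 | h1 <;> subst hs <;> simp [h1]
    · exact h s (List.mem_cons_of_mem _ hs)

lemma length_flip (σ : List ℝ) : (flipHead σ).length = σ.length := by
  cases σ <;> simp [flipHead]

lemma phi_flip (σ : List ℝ) (t : ℝ) : phi (flipHead σ) t = - phi σ t := by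
  cases σ <;> simp [phi, flipHead]

lemma phi_abs_lt {σ : List ℝ} (h : IsSigns σ) : |phi σ 2| < 2 := by
  induction σ with
  | nil => simp [phi]
  | cons s τ ih =>
    have hτ : IsSigns τ := fun x hx => h x (List.mem_cons_of_mem _ hx)
    have hlt := ih hτ
    have h1 : (2:ℝ) + phi τ 2 < 4 := by have := (abs_lt.mp hlt).2; linarith
    have h0 : (0:ℝ) ≤ 2 + phi τ 2 := by have := (abs_lt.mp hlt).1; linarith
    have hs : |s| = 1 := by rcases h s (by simp) with h1 | h1 <;> simp [h1]
    have : |phi (s :: τ) 2| = Real.sqrt (2 + phi τ 2) := by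
      simp [phi, abs_mul, hs, abs_of_nonneg (Real.sqrt_nonneg _)]
    rw [this]
    have : Real.sqrt (2 + phi τ 2) < Real.sqrt 4 := Real.sqrt_lt_sqrt h0 h1
    simpa [show Real.sqrt 4 = 2 by
      rw [show (4:ℝ) = 2^2 by norm_num, Real.sqrt_sq (by norm_num)]] using this

lemma radicand_pos {σ : List ℝ} (h : IsSigns σ) : 0 < 2 + phi σ 2 := by
  have := (abs_lt.mp (phi_abs_lt h)).1; linarith

lemma phi_ne_zero {s : ℝ} {τ : List ℝ} (h : IsSigns (s :: τ)) : phi (s :: τ) 2 ≠ 0 := by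
  have hτ : IsSigns τ := fun x hx => h x (List.mem_cons_of_mem _ hx)
  have hs : s ≠ 0 := by rcases h s (by simp) with h1 | h1 <;> simp [h1]
  have : Real.sqrt (2 + phi τ 2) ≠ 0 :=
    ne_of_gt (Real.sqrt_pos.mpr (radicand_pos hτ))
  simp [phi, hs, this]

lemma q_phi {s : ℝ} {τ : List ℝ} (h : IsSigns (s :: τ)) :
    q 2 (phi (s :: τ) 2) = phi (flipHead τ) 2 := by
  have hτ : IsSigns τ := fun x hx => h x (List.mem_cons_of_mem _ hx)
  have hs : s ^ 2 = 1 := by rcases h s (by simp) with h1 | h1 <;> simp [h1]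
  rw [phi_flip]
  have h0 : (0:ℝ) ≤ 2 + phi τ 2 := le_of_lt (radicand_pos hτ)
  simp only [q, phi, mul_pow, hs, one_mul, Real.sq_sqrt h0]
  ring

lemma phi_root : ∀ (n : ℕ) (σ : List ℝ), IsSigns σ → σ.length = n →
    (q 2)^[n] (phi σ 2) = 0 := by
  intro n
  induction n with
  | zero => intro σ _ hl; rw [List.length_eq_zero_iff] at hl; subst hl; simp [phi]
  | succ n ih =>
    intro σ hσ hl
    cases σ with
    | nil => simp at hl
    | cons s τ =>
      have hτ : IsSigns τ := fun x hx => hσ x (List.mem_cons_of_mem _ hx)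
      rw [Function.iterate_succ_apply, q_phi hσ]
      exact ih _ (isSigns_flip hτ) (by rw [length_flip]; simpa using hl)

lemma phi_hasDeriv : ∀ (n : ℕ) (σ : List ℝ), IsSigns σ → σ.length = n →
    ∃ d : ℝ, d ≠ 0 ∧ HasDerivAt (fun x => (q 2)^[n] x) d (phi σ 2) := by
  intro n
  induction n with
  | zero =>
    intro σ _ _
    exact ⟨1, one_ne_zero, by simp only [Function.iterate_zero, id_eq]; exact hasDerivAt_id' (phi σ 2)⟩
  | succ n ih =>
    intro σ hσ hl
    cases σ with
    | nil => simp at hl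
    | cons s τ =>
      have hτ : IsSigns τ := fun x hx => hσ x (List.mem_cons_of_mem _ hx)
      set x₀ := phi (s :: τ) 2 with hx₀
      obtain ⟨d, hd, hD⟩ := ih (flipHead τ) (isSigns_flip hτ)
        (by rw [length_flip]; simpa using hl)
      have hq : HasDerivAt (q 2) (-2 * x₀) x₀ := by
        have : HasDerivAt (fun x : ℝ => 2 - x ^ 2) (-(2 * x₀ ^ 1)) x₀ :=
          ((hasDerivAt_pow 2 x₀).const_sub 2)
        simpa [show q 2 = fun x : ℝ => 2 - x ^ 2 from rfl, mul_comm] using this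
      have hD' : HasDerivAt (fun x => (q 2)^[n] x) d (q 2 x₀) := by
        rw [hx₀, q_phi hσ]; exact hD
      have hcomp : HasDerivAt (fun x => (q 2)^[n] (q 2 x)) (d * (-2 * x₀)) x₀ :=
        hD'.comp x₀ hq
      refine ⟨d * (-2 * x₀), ?_, ?_⟩
      · exact mul_ne_zero hd (mul_ne_zero (by norm_num) (phi_ne_zero hσ))
      · simpa [Function.iterate_succ_apply] using hcomp

lemma phi_inj : ∀ (n : ℕ) (σ ρ : List ℝ), IsSigns σ → IsSigns ρ →
    σ.length = n → ρ.length = n → phi σ 2 = phi ρ 2 → σ = ρ := by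
  intro n
  induction n with
  | zero =>
    intro σ ρ _ _ h1 h2 _
    rw [List.length_eq_zero_iff] at h1 h2; rw [h1, h2]
  | succ n ih =>
    intro σ ρ hσ hρ h1 h2 heq
    cases σ with
    | nil => simp at h1
    | cons s τ =>
      cases ρ with
      | nil => simp at h2
      | cons s' τ' =>
        have hτ : IsSigns τ := fun x hx => hσ x (List.mem_cons_of_mem _ hx)
        have hτ' : IsSigns τ' := fun x hx => hρ x (List.mem_cons_of_mem _ hx)
        have hA : 0 < Real.sqrt (2 + phi τ 2) := Real.sqrt_pos.mpr (radicand_pos hτ)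
        have hB : 0 < Real.sqrt (2 + phi τ' 2) := Real.sqrt_pos.mpr (radicand_pos hτ')
        simp only [phi] at heq
        have hss : s = s' := by
          rcases hσ s (by simp) with e1 | e1 <;> rcases hρ s' (by simp) with e2 | e2 <;>
            subst e1 <;> subst e2 <;> first | rfl | nlinarith
        subst hss
        have hs0 : s ≠ 0 := by rcases hσ s (by simp) with e | e <;> simp [e]
        have hsq : Real.sqrt (2 + phi τ 2) = Real.sqrt (2 + phi τ' 2) :=
          mul_left_cancel₀ hs0 heq
        have : (2:ℝ) + phi τ 2 = 2 + phi τ' 2 := by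
          have := congrArg (fun x => x ^ 2) hsq
          simpa [Real.sq_sqrt (le_of_lt (radicand_pos hτ)),
            Real.sq_sqrt (le_of_lt (radicand_pos hτ'))] using this
        have : phi τ 2 = phi τ' 2 := by linarith
        rw [ih τ τ' hτ hτ' (by simpa using h1) (by simpa using h2) this]

lemma phi_surj : ∀ (n : ℕ) (x : ℝ), (q 2)^[n] x = 0 →
    ∃ σ : List ℝ, IsSigns σ ∧ σ.length = n ∧ x = phi σ 2 := by
  intro n
  induction n with
  | zero =>
    intro x hx
    exact ⟨[], by intro s hs; simp at hs, rfl, by simpa [phi] using hx⟩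
  | succ n ih =>
    intro x hx
    rw [Function.iterate_succ_apply] at hx
    obtain ⟨ρ, hρ, hlen, heq⟩ := ih _ hx
    have hrad : 0 < 2 + phi (flipHead ρ) 2 := radicand_pos (isSigns_flip hρ)
    have hx2 : x ^ 2 = 2 + phi (flipHead ρ) 2 := by
      rw [phi_flip]
      have : q 2 x = phi ρ 2 := heq
      simp only [q] at this
      linarith
    have hxne : x ≠ 0 := by
      intro h0; rw [h0] at hx2; simp at hx2; linarith
    refine ⟨(if 0 < x then 1 else -1) :: flipHead ρ,
      ?_, by simp [length_flip, hlen], ?_⟩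
    · intro s hs
      rcases List.mem_cons.mp hs with hs | hs
      · subst hs; split <;> simp
      · exact isSigns_flip hρ s hs
    · have hsqrt : Real.sqrt (2 + phi (flipHead ρ) 2) = |x| := by
        rw [← hx2, Real.sqrt_sq_eq_abs]
      simp only [phi, hsqrt]
      rcases lt_or_gt_of_ne hxne with h | h
      · rw [if_neg (not_lt.mpr (le_of_lt h)), abs_of_neg h]; ring
      · rw [if_pos h, abs_of_pos h, one_mul]


/-- For every `n ≥ 1`, the polynomial `q_2^n` has exactly `2^n` real roots, all
simple and in `(-2,2)`: the map `σ ↦ x̄_σ := φ_σ(2)` from sign sequences of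
length `n` to `ℝ` is injective; each `x̄_σ` is a root of `q_2^n` at which the
derivative of `q_2^n` is nonzero and `-2 < x̄_σ < 2`; and every real root of
`q_2^n` is of this form. -/
theorem roots_of_iterated_q_two (n : ℕ) (hn : 1 ≤ n) :
    (∀ σ ρ : List ℝ, IsSigns σ → IsSigns ρ → σ.length = n → ρ.length = n →
      phi σ 2 = phi ρ 2 → σ = ρ) ∧
    (∀ σ : List ℝ, IsSigns σ → σ.length = n →
      (q 2)^[n] (phi σ 2) = 0 ∧
      deriv (fun x => (q 2)^[n] x) (phi σ 2) ≠ 0 ∧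
      -2 < phi σ 2 ∧ phi σ 2 < 2) ∧
    (∀ x : ℝ, (q 2)^[n] x = 0 →
      ∃ σ : List ℝ, IsSigns σ ∧ σ.length = n ∧ x = phi σ 2) := by
  refine ⟨phi_inj n, ?_, phi_surj n⟩
  intro σ hσ hl
  obtain ⟨d, hd, hD⟩ := phi_hasDeriv n σ hσ hl
  refine ⟨phi_root n σ hσ hl, ?_, (abs_lt.mp (phi_abs_lt hσ)).1, (abs_lt.mp (phi_abs_lt hσ)).2⟩
  rw [hD.deriv]; exact hd
end

section
/- For every n ≥ 1 and every sign sequence σ = (σ₁,…,σ_n) ∈ {+1,−1}^n, the nested radical x̄_σ = σ₁√(2 + σ₂√(2 + ⋯ + σ_n√2)) has the trigonometric closed form x̄_σ = 2·sin( (π/4) · Σ_{k=1}^{n} (σ₁σ₂⋯σ_k) / 2^{k−1} ). -/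
noncomputable def S (σ : List ℝ) : ℝ :=
  ∑ k ∈ Finset.range σ.length, (∏ i ∈ Finset.range (k + 1), σ.getD i 0) / 2 ^ k

lemma S_cons (s : ℝ) (ρ : List ℝ) : S (s :: ρ) = s + s * S ρ / 2 := by
  unfold S
  rw [List.length_cons, Finset.sum_range_succ']
  rw [Finset.mul_sum, show (∏ i ∈ Finset.range (0+1), (s::ρ).getD i 0) / 2 ^ 0 = s by simp]
  rw [Finset.sum_div, add_comm]
  congr 1
  apply Finset.sum_congr rfl
  intro k _
  rw [Finset.prod_range_succ' (fun i => (s::ρ).getD i 0)]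
  simp only [List.getD_cons_succ, List.getD_cons_zero]
  ring

lemma S_bound (σ : List ℝ) (hσ : IsSigns σ) : |S σ| ≤ 2 := by
  have h1 : ∀ k ∈ Finset.range σ.length,
      |(∏ i ∈ Finset.range (k + 1), σ.getD i 0) / 2 ^ k| = (1/2 : ℝ) ^ k := by
    intro k hk
    rw [Finset.mem_range] at hk
    rw [abs_div, Finset.abs_prod]
    have : ∀ i ∈ Finset.range (k+1), |σ.getD i 0| = 1 := by
      intro i hi
      rw [Finset.mem_range] at hi
      have hil : i < σ.length := lt_of_lt_of_le (Nat.lt_of_lt_of_le hi hk) le_rfl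
      rw [List.getD_eq_getElem σ 0 hil]
      rcases hσ σ[i] (List.getElem_mem hil) with h | h <;> rw [h] <;> norm_num
    rw [Finset.prod_congr rfl this]
    simp [abs_pow, div_pow]
  calc |S σ| ≤ ∑ k ∈ Finset.range σ.length,
        |(∏ i ∈ Finset.range (k + 1), σ.getD i 0) / 2 ^ k| := Finset.abs_sum_le_sum_abs _ _
    _ = ∑ k ∈ Finset.range σ.length, (1/2 : ℝ) ^ k := Finset.sum_congr rfl h1
    _ ≤ 2 := sum_geometric_two_le _

lemma sqrt_two_add_two_sin (θ : ℝ) (h1 : -(Real.pi/2) ≤ θ) (h2 : θ ≤ Real.pi/2) :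
    Real.sqrt (2 + 2 * Real.sin θ) = 2 * Real.sin (Real.pi/4 + θ/2) := by
  have hpi := Real.pi_pos
  have hs : 0 ≤ Real.sin (Real.pi/4 + θ/2) :=
    Real.sin_nonneg_of_nonneg_of_le_pi (by linarith) (by linarith)
  have hsq : 2 + 2 * Real.sin θ = (2 * Real.sin (Real.pi/4 + θ/2)) ^ 2 := by
    have e1 : Real.sin (Real.pi/4 + θ/2)
        = Real.sqrt 2 / 2 * (Real.cos (θ/2) + Real.sin (θ/2)) := by
      rw [Real.sin_add, Real.sin_pi_div_four, Real.cos_pi_div_four]; ring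
    have e2 : Real.sin θ = 2 * Real.sin (θ/2) * Real.cos (θ/2) := by
      have := Real.sin_two_mul (θ/2)
      rwa [show 2 * (θ/2) = θ by ring] at this
    have e3 := Real.sin_sq_add_cos_sq (θ/2)
    have e4 : Real.sqrt 2 ^ 2 = 2 := Real.sq_sqrt (by norm_num)
    rw [e1, e2]; nlinarith [e3, e4]
  rw [hsq, Real.sqrt_sq (by linarith)]

/-- Trigonometric closed form of the nested radical: for every sign sequence
`σ = (σ₁,…,σ_n) ∈ {±1}^n` (`n ≥ 1`),
`x̄_σ = φ_σ(2) = 2·sin((π/4)·Σ_{k=1}^{n} (σ₁σ₂⋯σ_k)/2^{k-1})`.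
(Lists are 0-indexed: `σ.getD i 0` is `σ_{i+1}`.) -/
theorem nested_radical_trig_closed_form
    (σ : List ℝ) (hσ : IsSigns σ) (hne : σ ≠ []) :
    phi σ 2 = 2 * Real.sin (Real.pi / 4 *
      ∑ k ∈ Finset.range σ.length,
        (∏ i ∈ Finset.range (k + 1), σ.getD i 0) / 2 ^ k) := by
  have key : ∀ σ : List ℝ, IsSigns σ → σ ≠ [] → phi σ 2 = 2 * Real.sin (Real.pi / 4 * S σ) := by
    intro σ
    induction σ with
    | nil => intro _ h; exact absurd rfl h
    | cons s ρ ih =>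
      intro hσ _
      have hs : s = 1 ∨ s = -1 := hσ s List.mem_cons_self
      have hρ : IsSigns ρ := fun x hx => hσ x (List.mem_cons_of_mem _ hx)
      rw [S_cons]
      cases ρ with
      | nil =>
        show s * Real.sqrt (2 + 0) = _
        simp only [S]
        rcases hs with h | h <;> subst h <;>
          simp [Real.sin_pi_div_four, mul_comm, Real.sin_neg] <;> ring_nf
      | cons r ρ' =>
        have hIH := ih hρ (by simp)
        set θ := Real.pi / 4 * S (r :: ρ') with hθdef
        have hbd : |S (r :: ρ')| ≤ 2 := S_bound _ hρ
        have hpi := Real.pi_pos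
        have h1 : -(Real.pi/2) ≤ θ := by
          rw [hθdef]; rw [abs_le] at hbd; nlinarith [hbd.1]
        have h2 : θ ≤ Real.pi/2 := by
          rw [hθdef]; rw [abs_le] at hbd; nlinarith [hbd.2]
        show s * Real.sqrt (2 + phi (r :: ρ') 2) = _
        rw [hIH, show (2 : ℝ) + 2 * Real.sin θ = 2 + 2 * Real.sin θ from rfl,
          sqrt_two_add_two_sin θ h1 h2]
        have harg : Real.pi / 4 * (s + s * S (r :: ρ') / 2) = s * (Real.pi/4 + θ/2) := by
          rw [hθdef]; ring
        rw [harg]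
        rcases hs with h | h <;> subst h
        · ring
        · rw [show (-1:ℝ) * (Real.pi/4 + θ/2) = -(Real.pi/4 + θ/2) by ring, Real.sin_neg]
          ring
  have := key σ hσ hne
  rw [this]; rfl
end

section
/- Let σ = (σ₁,…,σ_n) ∈ {+1,−1}^n and let t ∈ [0,2] belong to the definition domain of the root branch φ_σ. Then: (i) q_t^n(φ_σ(t)) = 0, i.e. φ_σ(t) is a zero of the n-th iterate of q_t; (ii) −2 < φ_σ(t) < 2; and (iii) for every 1 ≤ k ≤ n−1, q_t^k(φ_σ(t)) = −φ_{(σ_{k+1},…,σ_n)}(t). -/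
lemma indom_tail {s : ℝ} {rest : List ℝ} {t : ℝ} (h : InDom (s :: rest) t) :
    InDom rest t := by
  refine ⟨h.1, fun ρ hρ _ => ?_⟩
  refine h.2 ρ (hρ.trans (List.suffix_cons s rest)) ?_
  intro he
  have := hρ.length_le
  simp [he] at this

lemma step_q {t s : ℝ} (hs : s = 1 ∨ s = -1) (rest : List ℝ)
    (hnn : 0 ≤ t + phi rest t) :
    q t (phi (s :: rest) t) = -phi rest t := by
  have hs2 : s ^ 2 = 1 := by rcases hs with h | h <;> simp [h]
  simp only [q, phi, mul_pow, hs2, one_mul, Real.sq_sqrt hnn]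
  ring

lemma phi_bound {t : ℝ} (ht : t ∈ Set.Icc (0 : ℝ) 2) :
    ∀ σ : List ℝ, IsSigns σ → InDom σ t → -2 < phi σ t ∧ phi σ t < 2 := by
  intro σ
  induction σ with
  | nil => intro _ _; norm_num [phi]
  | cons s rest ih =>
    intro hσ hdom
    have hs : s = 1 ∨ s = -1 := hσ s List.mem_cons_self
    have hnn : 0 ≤ t + phi rest t := hdom.2 rest (List.suffix_cons s rest) (by simp)
    have hrest := ih (fun x hx => hσ x (List.mem_cons_of_mem _ hx)) (indom_tail hdom)
    have hlt : t + phi rest t < 4 := by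
      have := ht.2; linarith [hrest.2]
    have h0 : (0 : ℝ) ≤ Real.sqrt (t + phi rest t) := Real.sqrt_nonneg _
    have h2 : Real.sqrt (t + phi rest t) < 2 := by
      rw [show (2 : ℝ) = Real.sqrt 4 by
        rw [show (4 : ℝ) = 2 ^ 2 by norm_num, Real.sqrt_sq (by norm_num)]]
      exact Real.sqrt_lt_sqrt hnn hlt
    rcases hs with h | h <;> simp only [phi, h, one_mul, neg_one_mul] <;>
      constructor <;> linarith

lemma iter_eq {t : ℝ} :
    ∀ σ : List ℝ, IsSigns σ → InDom σ t →
      ∀ k, 1 ≤ k → k ≤ σ.length → (q t)^[k] (phi σ t) = -phi (σ.drop k) t := by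
  intro σ
  induction σ with
  | nil => intro _ _ k hk hk'; simp at hk'; omega
  | cons s rest ih =>
    intro hσ hdom k hk hk'
    obtain ⟨m, rfl⟩ : ∃ m, k = m + 1 := ⟨k - 1, by omega⟩
    have hs : s = 1 ∨ s = -1 := hσ s List.mem_cons_self
    have hnn : 0 ≤ t + phi rest t := hdom.2 rest (List.suffix_cons s rest) (by simp)
    have h1 := step_q hs rest hnn
    rw [Function.iterate_succ_apply, h1]
    rcases Nat.eq_zero_or_pos m with hm | hm
    · subst hm; simp
    · obtain ⟨j, rfl⟩ : ∃ j, m = j + 1 := ⟨m - 1, by omega⟩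
      rw [Function.iterate_succ_apply, q_neg, ← Function.iterate_succ_apply]
      have := ih (fun x hx => hσ x (List.mem_cons_of_mem _ hx)) (indom_tail hdom)
        (j + 1) (by omega) (by simp at hk'; omega)
      simpa using this

/-- For `σ ∈ {±1}^n` and `t ∈ [0,2]` in the definition domain of `φ_σ`:
(i) `φ_σ(t)` is a zero of `q_t^n`; (ii) `-2 < φ_σ(t) < 2`; and (iii) for every
`1 ≤ k ≤ n-1`, `q_t^k(φ_σ(t)) = -φ_{(σ_{k+1},…,σ_n)}(t)`. -/
theorem root_branch_is_zero_of_iterate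
    (σ : List ℝ) (hσ : IsSigns σ) (hne : σ ≠ [])
    (t : ℝ) (ht : t ∈ Set.Icc (0 : ℝ) 2) (hdom : InDom σ t) :
    (q t)^[σ.length] (phi σ t) = 0 ∧
    (-2 < phi σ t ∧ phi σ t < 2) ∧
    (∀ k, 1 ≤ k → k ≤ σ.length - 1 →
      (q t)^[k] (phi σ t) = -phi (σ.drop k) t) := by
  have hlen : 1 ≤ σ.length := by
    cases σ with
    | nil => exact absurd rfl hne
    | cons a l => simp
  refine ⟨?_, phi_bound ht σ hσ hdom, fun k hk hk' => ?_⟩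
  · have := iter_eq σ hσ hdom σ.length hlen le_rfl
    simpa [phi] using this
  · exact iter_eq σ hσ hdom k hk (by omega)
end
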